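/- arXiv:math/0110179 — 6 statements merged into one kernel-verified Lean document; each statement's English description precedes it below -/
import Mathlib

section
/- Let p and q be coprime integers with q ≠ 0, p + q odd, and |p| > |q|. Then there exist a unique n ≥ 1 and a unique sequence of even integers α₁, …, αₙ with |αᵢ| ≥ 2 for all i such that p/q = [[α₁, …, αₙ]]. -/
/-- Negative continued fraction `[[α₁, …, αₙ]] = α₁ - 1/(α₂ - 1/(⋯ - 1/αₙ))`,
defined on lists of integers (`ncf [] = 0` is a junk value). -/
def ncf : List ℤ → ℚ
  | [] => 0
  | [a] => (a : ℚ)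
  | a :: b :: l => (a : ℚ) - 1 / ncf (b :: l)

lemma ncf_cons (a : ℤ) (t : List ℤ) :
    ncf (a :: t) = (a : ℚ) - (if t = [] then 0 else 1 / ncf t) := by
  cases t with
  | nil => simp [ncf]
  | cons b l => simp [ncf]

lemma one_lt_abs_ncf : ∀ L : List ℤ, L ≠ [] → (∀ a ∈ L, Even a ∧ 2 ≤ |a|) →
    1 < |ncf L| := by
  intro L
  induction L with
  | nil => intro h; exact absurd rfl h
  | cons a t ih =>
    intro _ hmem
    obtain ⟨hae, haabs⟩ := hmem a (by simp)
    rcases eq_or_ne t [] with rfl | ht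
    · rw [ncf_cons, if_pos rfl, sub_zero]
      rw [← Int.cast_abs]
      exact_mod_cast lt_of_lt_of_le one_lt_two haabs
    · have ht1 : 1 < |ncf t| := ih ht (fun b hb => hmem b (by simp [hb]))
      have hr : |1 / ncf t| < 1 := by
        rw [abs_div, abs_one, div_lt_one (lt_trans one_pos ht1)]
        exact ht1
      rw [ncf_cons, if_neg ht]
      have h2 : (2 : ℚ) ≤ |(a : ℚ)| := by
        rw [← Int.cast_abs]; exact_mod_cast haabs
      calc (1:ℚ) < |(a:ℚ)| - |1 / ncf t| := by linarith
        _ ≤ |(a:ℚ) - 1 / ncf t| := by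
            have := abs_sub_abs_le_abs_sub ((a:ℚ)) (1 / ncf t)
            linarith

lemma ncf_inj : ∀ L L' : List ℤ, L ≠ [] → (∀ a ∈ L, Even a ∧ 2 ≤ |a|) →
    L' ≠ [] → (∀ a ∈ L', Even a ∧ 2 ≤ |a|) → ncf L = ncf L' → L = L' := by
  intro L
  induction L with
  | nil => intro L' h; exact absurd rfl h
  | cons a t ih =>
    intro L' _ hmem hL' hmem' heq
    cases L' with
    | nil => exact absurd rfl hL'
    | cons a' t' =>
      rw [ncf_cons, ncf_cons] at heq
      -- bounds on remainders
      have key : ∀ (s : List ℤ), (∀ b ∈ s, Even b ∧ 2 ≤ |b|) →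
          |(if s = [] then 0 else 1 / ncf s : ℚ)| < 1 := by
        intro s hs
        rcases eq_or_ne s [] with rfl | hsne
        · simp
        · rw [if_neg hsne]
          have ht1 := one_lt_abs_ncf s hsne hs
          rw [abs_div, abs_one, div_lt_one (lt_trans one_pos ht1)]
          exact ht1
      have h1 := key t (fun b hb => hmem b (by simp [hb]))
      have h2 := key t' (fun b hb => hmem' b (by simp [hb]))
      have haa : a = a' := by
        have hcast : |(a : ℚ) - (a' : ℚ)| < 2 := by
          have : (a:ℚ) - (a':ℚ) =
              (if t = [] then 0 else 1 / ncf t) - (if t' = [] then 0 else 1 / ncf t') := by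
            linarith [heq]
          rw [this]
          calc |(if t = [] then 0 else 1 / ncf t : ℚ) - (if t' = [] then 0 else 1 / ncf t')|
              ≤ |(if t = [] then 0 else 1 / ncf t : ℚ)| + |(if t' = [] then 0 else 1 / ncf t' : ℚ)| :=
              abs_sub _ _
            _ < 2 := by linarith
        have hint : |a - a'| < 2 := by
          have : ((|a - a'| : ℤ) : ℚ) < 2 := by push_cast; exact_mod_cast hcast
          exact_mod_cast this
        obtain ⟨r, hr⟩ := (hmem a (by simp)).1
        obtain ⟨r', hr'⟩ := (hmem' a' (by simp)).1
        obtain ⟨hl, hr2⟩ := abs_lt.mp hint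
        omega
      subst haa
      have heq2 : (if t = [] then 0 else 1 / ncf t : ℚ) =
          (if t' = [] then 0 else 1 / ncf t') := by linarith [heq]
      rcases eq_or_ne t [] with rfl | htne <;> rcases eq_or_ne t' [] with rfl | htne'
      · rfl
      · exfalso
        rw [if_pos rfl, if_neg htne'] at heq2
        have := one_lt_abs_ncf t' htne' (fun b hb => hmem' b (by simp [hb]))
        have hnz : ncf t' ≠ 0 := by intro h; rw [h] at this; norm_num at this
        exact hnz (by field_simp at heq2; simp at heq2)
      · exfalso
        rw [if_neg htne, if_pos rfl] at heq2
        have := one_lt_abs_ncf t htne (fun b hb => hmem b (by simp [hb]))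
        have hnz : ncf t ≠ 0 := by intro h; rw [h] at this; norm_num at this
        exact hnz (by field_simp at heq2; simp at heq2)
      · rw [if_neg htne, if_neg htne'] at heq2
        have h1' := one_lt_abs_ncf t htne (fun b hb => hmem b (by simp [hb]))
        have h2' := one_lt_abs_ncf t' htne' (fun b hb => hmem' b (by simp [hb]))
        have hnz : ncf t ≠ 0 := by intro h; rw [h] at h1'; norm_num at h1'
        have hnz' : ncf t' ≠ 0 := by intro h; rw [h] at h2'; norm_num at h2'
        have : ncf t = ncf t' := by
          field_simp at heq2; linarith
        rw [ih t' htne (fun b hb => hmem b (by simp [hb])) htne'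
          (fun b hb => hmem' b (by simp [hb])) this]

lemma ncf_exists : ∀ (n : ℕ) (p q : ℤ), q.natAbs ≤ n → q ≠ 0 →
    Int.gcd p q = 1 → Odd (p + q) → |q| < |p| →
    ∃ L : List ℤ, L ≠ [] ∧ (∀ a ∈ L, Even a ∧ 2 ≤ |a|) ∧ ncf L = (p : ℚ) / (q : ℚ) := by
  intro n
  induction n with
  | zero =>
    intro p q hn hq
    exact absurd (Int.natAbs_eq_zero.mp (Nat.le_zero.mp hn)) hq
  | succ n ih =>
    intro p q hn hq hpq hodd habs
    have hqQ : (q : ℚ) ≠ 0 := Int.cast_ne_zero.mpr hq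
    set x : ℚ := (p : ℚ) / (q : ℚ) with hxdef
    have hxq : x * q = p := div_mul_cancel₀ _ hqQ
    -- x > 1 in absolute value
    have hx1 : 1 < |x| := by
      rw [hxdef, abs_div]
      rw [one_lt_div (by positivity : (0:ℚ) < |(q:ℚ)|)]
      rw [← Int.cast_abs, ← Int.cast_abs]
      exact_mod_cast habs
    -- x is not an odd integer
    have hxnotodd : ∀ m : ℤ, Odd m → x ≠ (m : ℚ) := by
      intro m hm hxm
      have hpm : p = m * q := by
        have : (p : ℚ) = (m : ℚ) * q := by rw [← hxq, hxm]
        exact_mod_cast this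
      have hqd : q ∣ p := ⟨m, by linarith [hpm]⟩
      have : q ∣ (Int.gcd p q : ℤ) := Int.dvd_coe_gcd hqd dvd_rfl
      rw [hpq] at this
      have hq1 : q = 1 ∨ q = -1 := Int.isUnit_iff.mp (isUnit_of_dvd_one this)
      obtain ⟨k, hk⟩ := hm
      obtain ⟨j, hj⟩ := hodd
      rcases hq1 with rfl | rfl <;> omega
    set a : ℤ := 2 * round (x / 2) with hadef
    have haeven : Even a := ⟨round (x / 2), by rw [hadef]; ring⟩
    have hxa : |x - (a : ℚ)| < 1 := by
      have hle : |x - (a : ℚ)| ≤ 1 := by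
        have := abs_sub_round (x / 2)
        have heq : x - (a : ℚ) = 2 * (x / 2 - round (x / 2)) := by
          push_cast [hadef]; ring
        rw [heq, abs_mul]
        rw [abs_two]
        linarith
      rcases lt_or_eq_of_le hle with h | h
      · exact h
      · exfalso
        rcases abs_eq (by norm_num : (0:ℚ) ≤ 1) |>.mp h with h' | h'
        · exact hxnotodd (a + 1) (by obtain ⟨r, hr⟩ := haeven; exact ⟨r, by omega⟩)
            (by push_cast; linarith)
        · exact hxnotodd (a - 1) (by obtain ⟨r, hr⟩ := haeven; exact ⟨r - 1, by omega⟩)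
            (by push_cast; linarith)
    have hane : a ≠ 0 := by
      intro h
      rw [h] at hxa
      have : |x| < 1 := by simpa using hxa
      linarith
    have haabs : 2 ≤ |a| := by
      obtain ⟨r, hr⟩ := haeven
      rcases le_or_gt 0 a with h | h
      · rw [abs_of_nonneg h]; omega
      · rw [abs_of_neg h]; omega
    set q' : ℤ := a * q - p with hq'def
    have hq'Q : (q' : ℚ) = ((a : ℚ) - x) * q := by
      push_cast [hq'def]
      field_simp [hxdef]
      rw [← hxq]; ring
    have hq'lt : |q'| < |q| := by
      have : |(q' : ℚ)| < |(q : ℚ)| := by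
        rw [hq'Q, abs_mul]
        have : |(a : ℚ) - x| < 1 := by rw [abs_sub_comm]; exact hxa
        calc |(a:ℚ) - x| * |(q:ℚ)| < 1 * |(q:ℚ)| := by
              apply mul_lt_mul_of_pos_right this (by positivity)
          _ = |(q:ℚ)| := one_mul _
      rw [← Int.cast_abs, ← Int.cast_abs] at this
      exact_mod_cast this
    rcases eq_or_ne q' 0 with hq'0 | hq'0
    · -- x = a, single term
      have hxa' : x = (a : ℚ) := by
        have : ((a : ℚ) - x) * q = 0 := by rw [← hq'Q, hq'0]; push_cast; rfl
        rcases mul_eq_zero.mp this with h | h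
        · linarith
        · exact absurd h hqQ
      refine ⟨[a], by simp, ?_, ?_⟩
      · intro b hb
        simp at hb
        subst hb
        exact ⟨haeven, haabs⟩
      · rw [show ncf [a] = (a : ℚ) from rfl, ← hxa', hxdef]
    · -- recurse
      have hgcd' : Int.gcd q q' = 1 := by
        rw [← Int.isCoprime_iff_gcd_eq_one]
        have hc : IsCoprime q p := (Int.isCoprime_iff_gcd_eq_one.mpr (by rwa [Int.gcd_comm] at hpq))
        have := (hc.neg_right.add_mul_left_right a)
        rwa [show -p + q * a = q' by rw [hq'def]; ring] at this
      have hodd' : Odd (q + q') := by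
        obtain ⟨r, hr⟩ := haeven
        obtain ⟨k, hk⟩ := hodd
        exact ⟨r * q + k - p, by rw [hq'def, hr]; ring_nf; omega⟩
      have habs' : |q'| < |q| := hq'lt
      have hn' : q'.natAbs ≤ n := by
        have h1 : q'.natAbs < q.natAbs := by
          rw [Int.abs_eq_natAbs, Int.abs_eq_natAbs] at hq'lt
          exact_mod_cast hq'lt
        omega
      obtain ⟨L, hLne, hLmem, hLval⟩ := ih q q' hn' hq'0 hgcd' hodd' habs'
      refine ⟨a :: L, by simp, ?_, ?_⟩
      · intro b hb
        rcases List.mem_cons.mp hb with rfl | hb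
        · exact ⟨haeven, haabs⟩
        · exact hLmem b hb
      · have hq'Q' : (q' : ℚ) ≠ 0 := Int.cast_ne_zero.mpr hq'0
        rw [ncf_cons, if_neg hLne, hLval]
        rw [hxdef]
        rw [one_div_div]
        have : (p : ℚ) = (a : ℚ) * q - q' := by
          rw [hq'def]; push_cast; ring
        rw [this]
        field_simp

/-- If `p`, `q` are coprime with `q ≠ 0`, `p + q` odd and `|p| > |q|`, then `p/q` has a
unique expansion as a negative continued fraction `[[α₁,…,αₙ]]` with all `αᵢ` even and
`|αᵢ| ≥ 2`. -/
theorem ncf_even_expansion_existsUnique (p q : ℤ) (hq : q ≠ 0)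
    (hpq : Int.gcd p q = 1) (hodd : Odd (p + q)) (habs : |q| < |p|) :
    ∃! L : List ℤ, L ≠ [] ∧ (∀ a ∈ L, Even a ∧ 2 ≤ |a|) ∧ ncf L = (p : ℚ) / (q : ℚ) := by
  obtain ⟨L, hLne, hLmem, hLval⟩ := ncf_exists q.natAbs p q le_rfl hq hpq hodd habs
  refine ⟨L, ⟨hLne, hLmem, hLval⟩, ?_⟩
  rintro L' ⟨hL'ne, hL'mem, hL'val⟩
  exact ncf_inj L' L hL'ne hL'mem hLne hLmem (by rw [hLval, hL'val])
end

section
/- Let p and q be coprime integers with q ≠ 0, p + q odd, and |p| > |q|, and suppose p/q = [[α₁, …, αₙ]] for even integers α₁, …, αₙ with |αᵢ| ≥ 2 for all i. Then the length n of the expansion satisfies n ≡ q (mod 2). -/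
lemma ncf_abs_gt_one : ∀ L : List ℤ, L ≠ [] → (∀ a ∈ L, Even a ∧ 2 ≤ |a|) → 1 < |ncf L|
  | [], h, _ => absurd rfl h
  | [a], _, hm => by
      have h2 := (hm a (by simp)).2
      have : (2:ℚ) ≤ |(a:ℚ)| := by exact_mod_cast h2
      simp only [ncf]
      linarith
  | a :: b :: l, _, hm => by
      have ih := ncf_abs_gt_one (b :: l) (by simp) (fun x hx => hm x (by simp [hx]))
      have ha : (2:ℚ) ≤ |(a:ℚ)| := by exact_mod_cast (hm a (by simp)).2
      have hne : ncf (b :: l) ≠ 0 := by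
        intro h; rw [h] at ih; norm_num at ih
      have hx : |1 / ncf (b :: l)| < 1 := by
        rw [abs_div, abs_one, div_lt_one (by positivity)]
        exact ih
      have h1 : |(a:ℚ)| - |1 / ncf (b :: l)| ≤ |(a:ℚ) - 1 / ncf (b :: l)| :=
        abs_sub_abs_le_abs_sub _ _
      show 1 < |(a:ℚ) - 1 / ncf (b :: l)|
      linarith

/-- The length `n` of the even negative continued fraction expansion of `p/q` satisfies
`n ≡ q (mod 2)`. -/
theorem ncf_even_expansion_length_parity (p q : ℤ) (hq : q ≠ 0)
    (hpq : Int.gcd p q = 1) (hodd : Odd (p + q)) (habs : |q| < |p|)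
    (L : List ℤ) (hL : L ≠ []) (hLe : ∀ a ∈ L, Even a ∧ 2 ≤ |a|)
    (hLncf : ncf L = (p : ℚ) / (q : ℚ)) :
    Int.ModEq 2 (L.length : ℤ) q := by
  induction L generalizing p q with
  | nil => exact absurd rfl hL
  | cons a l ih =>
    rcases eq_or_ne l [] with rfl | hl
    · -- base case: p/q = a, so q = ±1
      have hqQ : (q:ℚ) ≠ 0 := Int.cast_ne_zero.mpr hq
      have hpa : (p:ℚ) = (a:ℚ) * q := by
        field_simp at hLncf
        simp only [ncf] at hLncf
        linarith [hLncf]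
      have hpaZ : p = a * q := by exact_mod_cast hpa
      have hdvd : q ∣ p := ⟨a, by linarith [hpaZ, mul_comm a q]⟩
      have h1 : q ∣ (1 : ℤ) := by
        have := Int.dvd_coe_gcd hdvd (dvd_refl q)
        rwa [hpq] at this
        
      have hq1 : q = 1 ∨ q = -1 := Int.isUnit_iff.mp (isUnit_of_dvd_one h1)
      simp only [List.length_cons, List.length_nil]
      rcases hq1 with rfl | rfl <;> decide
    · -- inductive step
      obtain ⟨b, l', rfl⟩ := List.exists_cons_of_ne_nil hl
      set x := ncf (b :: l') with hxdef
      have hxgt : 1 < |x| := ncf_abs_gt_one _ (by simp) (fun y hy => hLe y (by simp [hy]))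
      have hxne : x ≠ 0 := by intro h; rw [h] at hxgt; norm_num at hxgt
      have hqQ : (q:ℚ) ≠ 0 := Int.cast_ne_zero.mpr hq
      have hLncf' : (a:ℚ) - 1 / x = (p:ℚ) / q := hLncf
      have hinv : 1 / x = ((a * q - p : ℤ) : ℚ) / q := by
        push_cast
        field_simp at hLncf' ⊢
        linarith [hLncf']
      have hq'ne : a * q - p ≠ 0 := by
        intro h
        rw [h] at hinv
        simp at hinv
        exact hxne (by simpa using hinv)
      have hq'Q : ((a * q - p : ℤ) : ℚ) ≠ 0 := Int.cast_ne_zero.mpr hq'ne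
      have hxval : x = (q : ℚ) / ((a * q - p : ℤ) : ℚ) := by
        rw [eq_div_iff hq'Q]
        have : x * (1 / x) = 1 := by field_simp
        rw [hinv] at this
        field_simp at this ⊢
        linarith [this]
      -- coprimality
      have hgcd' : Int.gcd q (a * q - p) = 1 := by
        rw [← Int.isCoprime_iff_gcd_eq_one]
        have hc : IsCoprime q p := (Int.isCoprime_iff_gcd_eq_one.mpr hpq).symm
        have : IsCoprime q (-p + q * a) := (hc.neg_right).add_mul_left_right a
        have he : a * q - p = -p + q * a := by ring
        rwa [he]
      -- parity
      obtain ⟨k, hk⟩ := (hLe a (by simp)).1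
      obtain ⟨m, hm⟩ := hodd
      have hodd' : Odd (q + (a * q - p)) := by
        refine ⟨k * q + m - p, ?_⟩
        rw [hk]; linear_combination hm
      -- size
      have habs' : |a * q - p| < |q| := by
        have h1 : (1:ℚ) < |(q:ℚ)| / |((a*q-p : ℤ):ℚ)| := by
          rw [← abs_div, ← hxval]; exact hxgt
        have h2 : |((a*q-p : ℤ):ℚ)| < |(q:ℚ)| := by
          rw [lt_div_iff₀ (by positivity)] at h1
          linarith
        have h3 : ((|a*q-p| : ℤ) : ℚ) < ((|q| : ℤ) : ℚ) := by
          push_cast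
          push_cast at h2
          exact h2
        exact_mod_cast h3
      have hih := ih q (a * q - p) hq'ne hgcd' hodd' habs' (by simp)
        (fun y hy => hLe y (by simp [hy])) hxval
      -- conclude
      have hih' : ((b :: l').length : ℤ) % 2 = (a * q - p) % 2 := hih
      show ((a :: b :: l').length : ℤ) % 2 = q % 2
      obtain ⟨t, ht⟩ : ∃ t, a * q = 2 * t := ⟨k * q, by rw [hk]; ring⟩
      rw [ht] at hih'
      simp only [List.length_cons] at hih' ⊢
      push_cast at hih' ⊢
      omega
end

section
/- For every integer n ≥ 2, σ(n−1, n, −1) = −(n−1). -/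
/-- The invariant `σ(q, p, ε)` (Fukumoto–Furuta–Ue): for integers `p ≠ 0`, `q` coprime to `p`
and a sign `ε ∈ {1, -1}`,
`σ(q,p,ε) = (1/p) ∑_{k=1}^{|p|-1} ( cot(πk/p)·cot(πkq/p) + 2 ε^k csc(πk/p)·csc(πkq/p) )`. -/
noncomputable def sigmaFFU (q p ε : ℤ) : ℝ :=
  (1 / (p : ℝ)) * ∑ k ∈ Finset.Icc 1 (p.natAbs - 1),
    ((Real.cos (Real.pi * k / p) / Real.sin (Real.pi * k / p)) *
       (Real.cos (Real.pi * k * q / p) / Real.sin (Real.pi * k * q / p)) +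
     2 * (ε : ℝ) ^ k *
       ((1 / Real.sin (Real.pi * k / p)) * (1 / Real.sin (Real.pi * k * q / p))))

open Finset Complex

lemma lemA (n : ℕ) (x : ℂ) :
    (1 - x) * ∑ j ∈ range n, (j : ℂ) * x ^ j
      = (∑ j ∈ range n, x ^ j) - 1 - ((n : ℂ) - 1) * x ^ n := by
  induction n with
  | zero => simp
  | succ n ih =>
    rw [sum_range_succ, sum_range_succ]; push_cast; linear_combination ih

lemma lemB (n : ℕ) (x : ℂ) :
    (1 - x) * ∑ j ∈ range n, (j : ℂ)^2 * x ^ j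
      = 2 * (∑ j ∈ range n, (j : ℂ) * x ^ j) - (∑ j ∈ range n, x ^ j) + 1
        - ((n : ℂ) - 1)^2 * x ^ n := by
  induction n with
  | zero => simp
  | succ n ih =>
    rw [sum_range_succ, sum_range_succ, sum_range_succ]; push_cast; linear_combination ih

lemma geom_zero {n : ℕ} {x : ℂ} (hx : x ≠ 1) (hxn : x ^ n = 1) :
    ∑ j ∈ range n, x ^ j = 0 := by
  rw [geom_sum_eq hx, hxn, sub_self, zero_div]

/-- key per-root identity -/
lemma keyP {n : ℕ} {x : ℂ} (hx : x ≠ 1) (hxn : x ^ n = 1) :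
    (1 - x)^2 * ∑ j ∈ range n, ((j : ℂ) * ((n : ℂ) - j)) * x ^ j = 2 * n * x := by
  have hg := geom_zero hx hxn
  have hA := lemA n x
  have hB := lemB n x
  rw [hg, hxn] at hA hB
  have hsplit : ∑ j ∈ range n, ((j : ℂ) * ((n : ℂ) - j)) * x ^ j
      = (n : ℂ) * (∑ j ∈ range n, (j : ℂ) * x ^ j) - ∑ j ∈ range n, (j : ℂ)^2 * x ^ j := by
    rw [mul_sum, ← sum_sub_distrib]
    exact sum_congr rfl fun j _ => by ring
  rw [hsplit]
  linear_combination (1 - x) * (n : ℂ) * hA - (1 - x) * hB - 2 * hA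

noncomputable def xx (n k : ℕ) : ℂ :=
  Complex.exp (2 * ((Real.pi * k / n : ℝ) : ℂ) * Complex.I)

lemma sin_sq_exp (t : ℝ) :
    (1 - Complex.exp (2 * (t : ℂ) * Complex.I))^2
      = -4 * Complex.exp (2 * (t : ℂ) * Complex.I) * ((Real.sin t : ℂ))^2 := by
  have h1 : Complex.exp (2 * (t : ℂ) * Complex.I)
      = Complex.exp ((t:ℂ) * Complex.I) * Complex.exp ((t:ℂ) * Complex.I) := by
    rw [← Complex.exp_add]; ring_nf
  have h2 : Complex.exp (-(t:ℂ) * Complex.I) * Complex.exp ((t:ℂ) * Complex.I) = 1 := by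
    rw [← Complex.exp_add]; norm_num
  rw [Complex.ofReal_sin, Complex.sin, h1]
  set e := Complex.exp ((t:ℂ) * Complex.I) with he
  set f := Complex.exp (-(t:ℂ) * Complex.I) with hf
  nth_rewrite 1 [← h2]
  have hI : (Complex.I : ℂ)^2 = -1 := Complex.I_sq
  linear_combination (e^2 * (f - e)^2) * hI

lemma xx_pow (n k j : ℕ) : xx n k ^ j = xx n (k * j) := by
  rw [xx, xx, ← Complex.exp_nat_mul]; congr 1; push_cast; ring

lemma xx_pow_n (n k : ℕ) (hn : n ≠ 0) : xx n k ^ n = 1 := by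
  rw [xx_pow, xx]
  have hn' : (n : ℝ) ≠ 0 := Nat.cast_ne_zero.mpr hn
  have h : Real.pi * ((k*n : ℕ) : ℝ) / (n : ℝ) = Real.pi * k := by
    push_cast; field_simp
  rw [h]
  have h2 : (2 * ((Real.pi * (k:ℝ) : ℝ) : ℂ) * Complex.I)
      = ((k:ℤ) : ℂ) * (2 * Real.pi * Complex.I) := by push_cast; ring
  rw [h2, Complex.exp_int_mul_two_pi_mul_I]

lemma sin_pos_of_mem (n k : ℕ) (hn : 2 ≤ n) (hk : k ∈ Icc 1 (n-1)) :
    0 < Real.sin (Real.pi * k / n) := by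
  simp only [mem_Icc] at hk
  have hn' : (0:ℝ) < n := by positivity
  apply Real.sin_pos_of_pos_of_lt_pi
  · have : (0:ℝ) < (k:ℝ) := by exact_mod_cast hk.1
    positivity
  · rw [div_lt_iff₀ hn']
    have : (k:ℝ) < n := by
      have : k < n := by omega
      exact_mod_cast this
    nlinarith [Real.pi_pos]

lemma xx_ne_one (n k : ℕ) (hs : Real.sin (Real.pi * k / n) ≠ 0) : xx n k ≠ 1 := by
  intro h
  rw [xx] at h
  have h2 := sin_sq_exp (Real.pi * k / n)
  rw [h] at h2
  have h3 : ((Real.sin (Real.pi * k / n) : ℝ) : ℂ)^2 = 0 := by linear_combination h2/4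
  have h4 : ((Real.sin (Real.pi * k / n) : ℝ) : ℂ) = 0 :=
    pow_eq_zero_iff two_ne_zero |>.mp h3
  exact hs (by exact_mod_cast h4)

lemma csc_complex (n k : ℕ) (hn : 2 ≤ n) (hk : k ∈ Icc 1 (n-1)) :
    (n:ℂ) * ((1 / Real.sin (Real.pi * k / n) : ℝ) : ℂ)^2
      = -2 * ∑ j ∈ range n, ((j : ℂ) * ((n : ℂ) - j)) * (xx n k) ^ j := by
  have hsp := sin_pos_of_mem n k hn hk
  have hs : Real.sin (Real.pi * k / n) ≠ 0 := ne_of_gt hsp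
  have hP := keyP (xx_ne_one n k hs) (xx_pow_n n k (by omega))
  have hx : xx n k = Complex.exp (2 * ((Real.pi * k / n : ℝ) : ℂ) * Complex.I) := rfl
  have hsq : (1 - xx n k)^2 = -4 * xx n k * ((Real.sin (Real.pi * k / n) : ℂ))^2 := by
    rw [hx]; exact sin_sq_exp _
  have hx0 : xx n k ≠ 0 := by rw [hx]; exact Complex.exp_ne_zero _
  have hsc : ((Real.sin (Real.pi * k / n) : ℝ) : ℂ) ≠ 0 := by exact_mod_cast hs
  rw [hsq] at hP
  have hP' : xx n k * ((-2:ℂ) * ((Real.sin (Real.pi * k / n) : ℂ))^2 *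
      ∑ j ∈ range n, ((j : ℂ) * ((n : ℂ) - j)) * (xx n k) ^ j) = xx n k * (n:ℂ) := by
    linear_combination hP / 2
  have hP'' := mul_left_cancel₀ hx0 hP'
  have hs2 : ((Real.sin (Real.pi * k / n) : ℂ))^2 ≠ 0 := pow_ne_zero _ hsc
  rw [Complex.ofReal_div, Complex.ofReal_one, div_pow, one_pow, mul_one_div,
    div_eq_iff hs2]
  linear_combination -hP''

lemma orth (n j : ℕ) (hn : 2 ≤ n) (hj : j ∈ Icc 1 (n-1)) :
    ∑ k ∈ Icc 1 (n-1), (xx n k) ^ j = -1 := by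
  have hs : Real.sin (Real.pi * j / n) ≠ 0 := ne_of_gt (sin_pos_of_mem n j hn hj)
  have h1 : ∀ k, (xx n k) ^ j = (xx n j) ^ k := by
    intro k; rw [xx_pow, xx_pow, Nat.mul_comm]
  simp only [h1]
  have hg := geom_zero (xx_ne_one n j hs) (xx_pow_n n j (by omega))
  have hins : range n = insert 0 (Icc 1 (n-1)) := by
    ext a; simp only [mem_range, mem_insert, mem_Icc]; omega
  rw [hins, sum_insert (by simp)] at hg
  simp only [pow_zero] at hg
  linear_combination hg

lemma sA (n : ℕ) : ∑ j ∈ range n, (j:ℂ) = n*((n:ℂ)-1)/2 := by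
  induction n with
  | zero => simp
  | succ n ih => rw [sum_range_succ]; push_cast; linear_combination ih

lemma sB (n : ℕ) : ∑ j ∈ range n, (j:ℂ)^2 = n*((n:ℂ)-1)*(2*n-1)/6 := by
  induction n with
  | zero => simp
  | succ n ih => rw [sum_range_succ]; push_cast; linear_combination ih

lemma sumC (n : ℕ) : ∑ j ∈ range n, (j:ℂ)*((n:ℂ)-j) = n*((n:ℂ)^2-1)/6 := by
  have hsplit : ∑ j ∈ range n, (j:ℂ)*((n:ℂ)-j)
      = (n:ℂ) * (∑ j ∈ range n, (j:ℂ)) - ∑ j ∈ range n, (j:ℂ)^2 := by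
    rw [mul_sum, ← sum_sub_distrib]
    exact sum_congr rfl fun j _ => by ring
  rw [hsplit, sA, sB]; ring

lemma total (n : ℕ) (hn : 2 ≤ n) :
    ∑ k ∈ Icc 1 (n-1), ((1 / Real.sin (Real.pi * k / n) : ℝ) : ℂ)^2
      = ((n:ℂ)^2-1)/3 := by
  have hn0 : (n:ℂ) ≠ 0 := Nat.cast_ne_zero.mpr (by omega)
  have h1 : (n:ℂ) * ∑ k ∈ Icc 1 (n-1), ((1 / Real.sin (Real.pi * k / n) : ℝ) : ℂ)^2
      = ∑ k ∈ Icc 1 (n-1), (-2:ℂ) * ∑ j ∈ range n, ((j:ℂ)*((n:ℂ)-j)) * (xx n k)^j := by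
    rw [mul_sum]; exact sum_congr rfl fun k hk => csc_complex n k hn hk
  have h2 : ∑ k ∈ Icc 1 (n-1), (-2:ℂ) * ∑ j ∈ range n, ((j:ℂ)*((n:ℂ)-j)) * (xx n k)^j
      = (-2:ℂ) * ∑ j ∈ range n, (((j:ℂ)*((n:ℂ)-j)) * ∑ k ∈ Icc 1 (n-1), (xx n k)^j) := by
    rw [← mul_sum]
    congr 1
    rw [sum_comm]
    exact sum_congr rfl fun j _ => by rw [mul_sum]
  have h3 : ∑ j ∈ range n, (((j:ℂ)*((n:ℂ)-j)) * ∑ k ∈ Icc 1 (n-1), (xx n k)^j)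
      = -∑ j ∈ range n, (j:ℂ)*((n:ℂ)-j) := by
    rw [← sum_neg_distrib]
    refine sum_congr rfl fun j hj => ?_
    rcases Nat.eq_zero_or_pos j with h0 | h0
    · subst h0; simp
    · rw [orth n j hn (by simp only [mem_range] at hj; simp only [mem_Icc]; omega)]; ring
  have h4 := sumC n
  have key : (n:ℂ) * ∑ k ∈ Icc 1 (n-1), ((1 / Real.sin (Real.pi * k / n) : ℝ) : ℂ)^2
      = (n:ℂ) * (((n:ℂ)^2-1)/3) := by
    rw [h1, h2, h3, h4]; ring
  exact mul_left_cancel₀ hn0 key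

lemma csc_sum_real (n : ℕ) (hn : 2 ≤ n) :
    ∑ k ∈ Icc 1 (n-1), (1 / Real.sin (Real.pi * k / n))^2 = ((n:ℝ)^2-1)/3 := by
  exact_mod_cast total n hn

/-- For `n ≥ 2`, `σ(n - 1, n, -1) = -(n - 1)`. -/
theorem sigmaFFU_pred (n : ℤ) (hn : 2 ≤ n) :
    sigmaFFU (n - 1) n (-1) = -((n : ℝ) - 1) := by
  obtain ⟨m, rfl⟩ : ∃ m : ℕ, n = (m : ℤ) := ⟨n.toNat, (Int.toNat_of_nonneg (by omega)).symm⟩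
  have hm : 2 ≤ m := by exact_mod_cast hn
  have hm0 : (m : ℝ) ≠ 0 := by positivity
  rw [sigmaFFU]
  have hnat : ((m : ℤ)).natAbs = m := Int.natAbs_natCast m
  rw [hnat]
  have hterm : ∀ k ∈ Icc 1 (m - 1),
      (Real.cos (Real.pi * k / ((m:ℤ) : ℝ)) / Real.sin (Real.pi * k / ((m:ℤ) : ℝ))) *
        (Real.cos (Real.pi * k * (((m:ℤ) - 1 : ℤ) : ℝ) / ((m:ℤ) : ℝ)) /
          Real.sin (Real.pi * k * (((m:ℤ) - 1 : ℤ) : ℝ) / ((m:ℤ) : ℝ))) +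
      2 * (((-1 : ℤ) : ℝ)) ^ k *
        ((1 / Real.sin (Real.pi * k / ((m:ℤ) : ℝ))) *
          (1 / Real.sin (Real.pi * k * (((m:ℤ) - 1 : ℤ) : ℝ) / ((m:ℤ) : ℝ))))
      = 1 - 3 * (1 / Real.sin (Real.pi * k / m))^2 := by
    intro k hk
    have hsp := sin_pos_of_mem m k hm hk
    have hs : Real.sin (Real.pi * k / m) ≠ 0 := ne_of_gt hsp
    have hcast1 : (((m:ℤ)) : ℝ) = (m : ℝ) := by push_cast; ring
    have hcast2 : ((((m:ℤ) - 1 : ℤ)) : ℝ) = (m : ℝ) - 1 := by push_cast; ring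
    rw [hcast1, hcast2]
    have harg : Real.pi * k * ((m:ℝ) - 1) / m = (k : ℝ) * Real.pi - Real.pi * k / m := by
      field_simp
    rw [harg, Real.sin_nat_mul_pi_sub, Real.cos_nat_mul_pi_sub]
    have hpow : (((-1 : ℤ) : ℝ)) ^ k = (-1 : ℝ) ^ k := by norm_num
    rw [hpow]
    have hne : ((-1 : ℝ)) ^ k ≠ 0 := by
      rcases Nat.even_or_odd k with h | h
      · rw [h.neg_one_pow]; norm_num
      · rw [h.neg_one_pow]; norm_num
    have hpyth := Real.sin_sq_add_cos_sq (Real.pi * k / m)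
    set s := Real.sin (Real.pi * k / m)
    set c := Real.cos (Real.pi * k / m)
    field_simp
    linear_combination (-1:ℝ) * hpyth
  rw [sum_congr rfl hterm]
  rw [sum_sub_distrib, sum_const, Nat.card_Icc, ← mul_sum]
  rw [csc_sum_real m hm]
  have hcard : (m - 1 + 1 - 1) = m - 1 := by omega
  rw [hcard]
  have hm1 : ((m - 1 : ℕ) : ℝ) = (m : ℝ) - 1 := by
    have : (1:ℕ) ≤ m := by omega
    push_cast [this]; ring
  push_cast [hm1]
  field_simp
  rw [nsmul_eq_mul, hm1]; ring
end

section
/- For every integer n ≥ 2, σ(n, 1−n, −1) = 2 − n. -/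
open Finset Complex

noncomputable def eu (m k : ℕ) : ℂ := Complex.exp (2 * Real.pi * Complex.I * k / m)



lemma geom_aux (m : ℕ) (ζ : ℂ) (h1 : ζ ^ m = 1) (h2 : ζ ≠ 1) :
    ∑ j ∈ Finset.range m, ζ ^ j = 0 := by
  rw [geom_sum_eq h2, h1, sub_self, zero_div]

lemma sum_j_zeta (m : ℕ) (ζ : ℂ) :
    (ζ - 1) * ∑ j ∈ Finset.range m, (j : ℂ) * ζ ^ j
      = ((m : ℂ) - 1) * ζ ^ m - (∑ j ∈ Finset.range m, ζ ^ j) + 1 := by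
  induction m with
  | zero => simp
  | succ m ih =>
    rw [Finset.sum_range_succ, Finset.sum_range_succ (f := fun j => ζ ^ j)]
    push_cast
    ring_nf
    ring_nf at ih
    linear_combination ih

lemma sum_j2_zeta (m : ℕ) (ζ : ℂ) :
    (ζ - 1) * ∑ j ∈ Finset.range m, (j : ℂ) ^ 2 * ζ ^ j
      = ((m : ℂ) - 1) ^ 2 * ζ ^ m - 2 * (∑ j ∈ Finset.range m, (j : ℂ) * ζ ^ j)
        + (∑ j ∈ Finset.range m, ζ ^ j) - 1 := by
  induction m with
  | zero => simp
  | succ m ih =>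
    rw [Finset.sum_range_succ, Finset.sum_range_succ (f := fun j => (j : ℂ) * ζ ^ j),
      Finset.sum_range_succ (f := fun j => ζ ^ j)]
    push_cast
    ring_nf
    ring_nf at ih
    linear_combination ih

lemma key_root (m : ℕ) (ζ : ℂ) (h1 : ζ ^ m = 1) (h2 : ζ ≠ 1) :
    2 * (m : ℂ) * ζ = (m : ℂ) * ((m : ℂ) - 1) * (ζ - 1)
      - (ζ - 1) ^ 2 * ∑ j ∈ Finset.range m, ((j : ℂ) ^ 2 - j) * ζ ^ j := by
  have hG := geom_aux m ζ h1 h2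
  have hS1 := sum_j_zeta m ζ
  have hS2 := sum_j2_zeta m ζ
  rw [h1, hG] at hS1 hS2
  have hsplit : ∑ j ∈ Finset.range m, ((j : ℂ) ^ 2 - j) * ζ ^ j
      = (∑ j ∈ Finset.range m, (j : ℂ) ^ 2 * ζ ^ j) - ∑ j ∈ Finset.range m, (j : ℂ) * ζ ^ j := by
    rw [← Finset.sum_sub_distrib]; apply Finset.sum_congr rfl; intros; ring
  rw [hsplit]
  linear_combination (ζ - 1) * hS2 - (ζ - 1) * hS1 - 2 * hS1

lemma sum_sq_sub (m : ℕ) :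
    ∑ j ∈ Finset.range m, ((j : ℂ) ^ 2 - j) = (m : ℂ) * ((m : ℂ) - 1) * ((m : ℂ) - 2) / 3 := by
  induction m with
  | zero => simp
  | succ m ih =>
    rw [Finset.sum_range_succ, ih]
    push_cast
    ring

lemma pair_lemma (ζ ζ' : ℂ) (h : ζ * ζ' = 1) (h1 : ζ ≠ 1) (h2 : ζ' ≠ 1) :
    1 / (ζ - 1) + 1 / (ζ' - 1) = -1 := by
  have d1 : ζ - 1 ≠ 0 := sub_ne_zero.mpr h1
  have d2 : ζ' - 1 ≠ 0 := sub_ne_zero.mpr h2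
  field_simp
  linear_combination h



lemma eu_pow_m (m : ℕ) (hm : m ≠ 0) (k : ℕ) : (eu m k) ^ m = 1 := by
  rw [eu, ← Complex.exp_nat_mul]
  have : (m : ℂ) * (2 * Real.pi * Complex.I * k / m) = (k : ℤ) * (2 * Real.pi * Complex.I) := by
    have : (m : ℂ) ≠ 0 := Nat.cast_ne_zero.mpr hm
    field_simp
    norm_cast
  rw [this, Complex.exp_int_mul_two_pi_mul_I]

lemma eu_ne_one (m k : ℕ) (hk : 1 ≤ k) (hk2 : k ≤ m - 1) (hm : 1 ≤ m) : eu m k ≠ 1 := by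
  intro h
  rw [eu, Complex.exp_eq_one_iff] at h
  obtain ⟨n, hn⟩ := h
  have hmne : (m : ℂ) ≠ 0 := Nat.cast_ne_zero.mpr (by omega)
  have hpi : (Real.pi : ℂ) ≠ 0 := Complex.ofReal_ne_zero.mpr Real.pi_ne_zero
  have hne : (2 * (Real.pi:ℂ) * Complex.I) ≠ 0 := by
    simp [hpi, Complex.I_ne_zero]
  field_simp at hn
  have h2 : (k : ℂ) = (n : ℂ) * m :=
    mul_left_cancel₀ hne (by linear_combination (2 * (Real.pi:ℂ) * Complex.I) * hn)
  have h3 : (k : ℤ) = n * m := by exact_mod_cast h2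
  have hkm : k < m := by omega
  rcases le_or_gt n 0 with hn0 | hn0
  · nlinarith [h3, (show (1:ℤ) ≤ k by exact_mod_cast hk), (show (0:ℤ) < m by exact_mod_cast hm)]
  · nlinarith [h3, (show (k:ℤ) < m by exact_mod_cast hkm), (show (0:ℤ) < m by exact_mod_cast hm)]

lemma eu_ne_zero (m k : ℕ) : eu m k ≠ 0 := Complex.exp_ne_zero _

lemma eu_mul_eu (m : ℕ) (hm : m ≠ 0) (k : ℕ) (hk : k ≤ m) : eu m k * eu m (m - k) = 1 := by
  rw [eu, eu, ← Complex.exp_add]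
  have hcast : ((m - k : ℕ) : ℂ) = (m : ℂ) - k := by
    push_cast [Nat.cast_sub hk]; ring
  rw [hcast]
  have hmne : (m : ℂ) ≠ 0 := Nat.cast_ne_zero.mpr hm
  have : 2 * (Real.pi:ℂ) * Complex.I * k / m + 2 * Real.pi * Complex.I * ((m:ℂ) - k) / m
      = (1 : ℤ) * (2 * Real.pi * Complex.I) := by
    field_simp; ring
  rw [this, Complex.exp_int_mul_two_pi_mul_I]

lemma eu_pow_comm (m : ℕ) (k j : ℕ) : (eu m k) ^ j = (eu m j) ^ k := by
  rw [eu, eu, ← Complex.exp_nat_mul, ← Complex.exp_nat_mul]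
  congr 1
  ring



lemma sum_T1 (m : ℕ) (hm : 1 ≤ m) :
    ∑ k ∈ Finset.Icc 1 (m - 1), 1 / (eu m k - 1) = -((m : ℂ) - 1) / 2 := by
  have hre : ∑ k ∈ Finset.Icc 1 (m - 1), 1 / (eu m (m - k) - 1)
      = ∑ k ∈ Finset.Icc 1 (m - 1), 1 / (eu m k - 1) := by
    apply Finset.sum_nbij' (fun k => m - k) (fun k => m - k) <;>
      simp only [Finset.mem_Icc] <;> intros a ha <;> first | omega | trivial
  have hdouble : (∑ k ∈ Finset.Icc 1 (m - 1), 1 / (eu m k - 1))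
      + ∑ k ∈ Finset.Icc 1 (m - 1), 1 / (eu m k - 1)
      = ∑ k ∈ Finset.Icc 1 (m - 1), (-1 : ℂ) := by
    nth_rewrite 2 [← hre]
    rw [← Finset.sum_add_distrib]
    apply Finset.sum_congr rfl
    intro k hk
    simp only [Finset.mem_Icc] at hk
    exact pair_lemma _ _ (eu_mul_eu m (by omega) k (by omega))
      (eu_ne_one m k hk.1 hk.2 hm) (eu_ne_one m (m - k) (by omega) (by omega) hm)
  rw [Finset.sum_const, Nat.card_Icc] at hdouble
  have hc : ((m - 1 + 1 - 1 : ℕ) : ℂ) = (m : ℂ) - 1 := by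
    have : (m - 1 + 1 - 1 : ℕ) = m - 1 := by omega
    rw [this]
    push_cast [Nat.cast_sub hm]
    ring
  rw [nsmul_eq_mul, hc] at hdouble
  linear_combination hdouble / 2

lemma sum_pow_eu (m : ℕ) (hm : 1 ≤ m) (j : ℕ) (hj1 : 1 ≤ j) (hj2 : j ≤ m - 1) :
    ∑ k ∈ Finset.Icc 1 (m - 1), (eu m k) ^ j = -1 := by
  have h1 : ∀ k, (eu m k) ^ j = (eu m j) ^ k := fun k => eu_pow_comm m k j
  simp only [h1]
  have h0 : ∑ k ∈ Finset.range m, (eu m j) ^ k = 0 :=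
    geom_aux m _ (eu_pow_m m (by omega) j) (eu_ne_one m j hj1 hj2 hm)
  have hIcc : Finset.Icc 1 (m - 1) = Finset.Ico 1 m := by
    rw [← Finset.Ico_add_one_right_eq_Icc]
    congr 1
    omega
  rw [Finset.range_eq_Ico, Finset.sum_eq_sum_Ico_succ_bot (by omega)] at h0
  rw [hIcc]
  simp only [pow_zero] at h0
  linear_combination h0

lemma sum_B (m : ℕ) (hm : 1 ≤ m) :
    ∑ k ∈ Finset.Icc 1 (m - 1), eu m k / (eu m k - 1) ^ 2 = -((m : ℂ) ^ 2 - 1) / 12 := by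
  have hterm : ∀ k ∈ Finset.Icc 1 (m - 1),
      eu m k / (eu m k - 1) ^ 2
        = ((m : ℂ) - 1) / 2 * (1 / (eu m k - 1))
          - 1 / (2 * m) * ∑ j ∈ Finset.range m, ((j : ℂ) ^ 2 - j) * (eu m k) ^ j := by
    intro k hk
    simp only [Finset.mem_Icc] at hk
    have h2 := eu_ne_one m k hk.1 hk.2 hm
    have hd : eu m k - 1 ≠ 0 := sub_ne_zero.mpr h2
    have hmne : (m : ℂ) ≠ 0 := Nat.cast_ne_zero.mpr (by omega)
    have hkey := key_root m (eu m k) (eu_pow_m m (by omega) k) h2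
    field_simp
    ring_nf
    ring_nf at hkey
    linear_combination hkey
  rw [Finset.sum_congr rfl hterm, Finset.sum_sub_distrib, ← Finset.mul_sum, ← Finset.mul_sum,
    sum_T1 m hm]
  have hsw : ∑ k ∈ Finset.Icc 1 (m - 1), ∑ j ∈ Finset.range m, ((j : ℂ) ^ 2 - j) * (eu m k) ^ j
      = -((m : ℂ) * ((m : ℂ) - 1) * ((m : ℂ) - 2) / 3) := by
    rw [Finset.sum_comm]
    have hinner : ∀ j ∈ Finset.range m,
        ∑ k ∈ Finset.Icc 1 (m - 1), ((j : ℂ) ^ 2 - j) * (eu m k) ^ j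
          = -((j : ℂ) ^ 2 - j) := by
      intro j hj
      simp only [Finset.mem_range] at hj
      rw [← Finset.mul_sum]
      rcases Nat.eq_zero_or_pos j with h0 | h0
      · subst h0; simp
      · rw [sum_pow_eu m hm j h0 (by omega)]
        ring
    rw [Finset.sum_congr rfl hinner, Finset.sum_neg_distrib, sum_sq_sub]
  rw [hsw]
  have hmne : (m : ℂ) ≠ 0 := Nat.cast_ne_zero.mpr (by omega)
  field_simp
  ring



lemma sin_ne_zero_of (m k : ℕ) (hm : 1 ≤ m) (hk1 : 1 ≤ k) (hk2 : k ≤ m - 1) :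
    Real.sin (Real.pi * k / m) ≠ 0 := by
  have hmpos : (0:ℝ) < m := by exact_mod_cast (by omega : 0 < m)
  have hkpos : (0:ℝ) < k := by exact_mod_cast (by omega : 0 < k)
  have hklt : (k:ℝ) < m := by exact_mod_cast (by omega : k < m)
  apply ne_of_gt
  apply Real.sin_pos_of_pos_of_lt_pi
  · positivity
  · rw [div_lt_iff₀ hmpos]
    nlinarith [Real.pi_pos]

lemma csc_sq_eq (m k : ℕ) (hm : 1 ≤ m) (hk1 : 1 ≤ k) (hk2 : k ≤ m - 1) :
    (((1 / Real.sin (Real.pi * k / m)) ^ 2 : ℝ) : ℂ)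
      = -4 * eu m k / (eu m k - 1) ^ 2 := by
  set θ : ℝ := Real.pi * k / m with hθ
  have hmne : (m : ℂ) ≠ 0 := Nat.cast_ne_zero.mpr (by omega)
  have hz : eu m k = (((Real.cos θ : ℝ) : ℂ) + ((Real.sin θ : ℝ) : ℂ) * Complex.I) ^ 2 := by
    rw [Complex.ofReal_cos, Complex.ofReal_sin, ← Complex.exp_mul_I, ← Complex.exp_nat_mul, eu]
    congr 1
    push_cast [hθ]
    field_simp
  have hp : (((Real.cos θ : ℝ) : ℂ)) ^ 2 + (((Real.sin θ : ℝ) : ℂ)) ^ 2 = 1 := by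
    norm_cast
    exact Real.cos_sq_add_sin_sq θ
  have hs : Real.sin θ ≠ 0 := sin_ne_zero_of m k hm hk1 hk2
  have hsC : ((Real.sin θ : ℝ) : ℂ) ≠ 0 := Complex.ofReal_ne_zero.mpr hs
  set c : ℂ := ((Real.cos θ : ℝ) : ℂ)
  set s : ℂ := ((Real.sin θ : ℝ) : ℂ)
  have hz2 : eu m k - 1 = 2 * s * Complex.I * (c + s * Complex.I) := by
    linear_combination hz - s ^ 2 * Complex.I_sq + hp
  have hsq : (eu m k - 1) ^ 2 = -4 * s ^ 2 * eu m k := by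
    rw [hz2]
    linear_combination (4 * s ^ 2 * (c + s * Complex.I) ^ 2) * Complex.I_sq + 4 * s ^ 2 * hz
  have hz0 : eu m k ≠ 0 := eu_ne_zero m k
  have hd : eu m k - 1 ≠ 0 := sub_ne_zero.mpr (eu_ne_one m k hk1 hk2 hm)
  rw [Complex.ofReal_pow, Complex.ofReal_div, Complex.ofReal_one, div_pow, one_pow,
    div_eq_div_iff (pow_ne_zero 2 hsC) (pow_ne_zero 2 hd)]
  linear_combination hsq

lemma sum_csc_sq (m : ℕ) (hm : 1 ≤ m) :
    ∑ k ∈ Finset.Icc 1 (m - 1), (1 / Real.sin (Real.pi * k / m)) ^ 2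
      = ((m : ℝ) ^ 2 - 1) / 3 := by
  apply Complex.ofReal_injective
  have h1 : ∀ k ∈ Finset.Icc 1 (m - 1),
      (((1 / Real.sin (Real.pi * k / m)) ^ 2 : ℝ) : ℂ)
        = -4 * (eu m k / (eu m k - 1) ^ 2) := by
    intro k hk
    simp only [Finset.mem_Icc] at hk
    rw [csc_sq_eq m k hm hk.1 hk.2]
    ring
  rw [Complex.ofReal_sum, Finset.sum_congr rfl h1, ← Finset.mul_sum, sum_B m hm]
  push_cast
  ring



/-- For `n ≥ 2`, `σ(n, 1 - n, -1) = 2 - n`. -/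
theorem sigmaFFU_one_sub (n : ℤ) (hn : 2 ≤ n) :
    sigmaFFU n (1 - n) (-1) = 2 - (n : ℝ) := by
  set M : ℕ := (n - 1).toNat with hMdef
  have hM1 : 1 ≤ M := by omega
  have hMZ : (M : ℤ) = n - 1 := by omega
  have hNA : (1 - n).natAbs = M := by omega
  have hx : ((M : ℕ) : ℝ) = (n : ℝ) - 1 := by exact_mod_cast congrArg (Int.cast : ℤ → ℝ) hMZ
  have hxne : ((M : ℕ) : ℝ) ≠ 0 := by positivity
  have hcast : (((1 - n : ℤ)) : ℝ) = -(M : ℝ) := by push_cast [hx]; ring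
  rw [sigmaFFU, hNA]
  have hterm : ∀ k ∈ Finset.Icc 1 (M - 1),
      (Real.cos (Real.pi * k / ((1 - n : ℤ) : ℝ)) / Real.sin (Real.pi * k / ((1 - n : ℤ) : ℝ))) *
        (Real.cos (Real.pi * k * n / ((1 - n : ℤ) : ℝ)) /
          Real.sin (Real.pi * k * n / ((1 - n : ℤ) : ℝ))) +
      2 * (((-1 : ℤ)) : ℝ) ^ k *
        ((1 / Real.sin (Real.pi * k / ((1 - n : ℤ) : ℝ))) *
          (1 / Real.sin (Real.pi * k * n / ((1 - n : ℤ) : ℝ))))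
      = 3 * (1 / Real.sin (Real.pi * k / M)) ^ 2 - 1 := by
    intro k hk
    simp only [Finset.mem_Icc] at hk
    have hs : Real.sin (Real.pi * k / M) ≠ 0 := sin_ne_zero_of M k hM1 hk.1 hk.2
    have hA1 : Real.pi * k / ((1 - n : ℤ) : ℝ) = -(Real.pi * k / M) := by
      rw [hcast, div_neg]
    have hA2 : Real.pi * k * n / ((1 - n : ℤ) : ℝ) = -(Real.pi * k / M + k * Real.pi) := by
      rw [hcast]
      have hn' : (n : ℝ) = (M : ℝ) + 1 := by rw [hx]; ring
      rw [hn', div_neg, neg_inj]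
      field_simp
      ring
    rw [hA1, hA2, Real.sin_neg, Real.cos_neg, Real.sin_neg, Real.cos_neg,
      Real.sin_add_nat_mul_pi, Real.cos_add_nat_mul_pi]
    push_cast
    have ht : ((-1 : ℝ)) ^ k ≠ 0 := by
      apply pow_ne_zero; norm_num
    have ht2 : (((-1 : ℝ)) ^ k) ^ 2 = 1 := by
      rw [← pow_mul, mul_comm, pow_mul]; norm_num
    have hpy : Real.sin (Real.pi * k / M) ^ 2 + Real.cos (Real.pi * k / M) ^ 2 = 1 :=
      Real.sin_sq_add_cos_sq _
    field_simp
    linear_combination hpy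
  rw [Finset.sum_congr rfl hterm, Finset.sum_sub_distrib, ← Finset.mul_sum, sum_csc_sq M hM1,
    Finset.sum_const, Nat.card_Icc, hcast]
  have hc1 : ((M - 1 + 1 - 1 : ℕ) : ℝ) = (M : ℝ) - 1 := by
    have h' : (M - 1 + 1 - 1 : ℕ) = M - 1 := by omega
    rw [h', Nat.cast_sub hM1]
    norm_num
  rw [nsmul_eq_mul, hc1, hx]
  have h1n : 1 - (n : ℝ) ≠ 0 := by
    intro h
    have : (n : ℝ) = 1 := by linarith
    have : n = 1 := by exact_mod_cast this
    omega
  have h1n' : (n : ℝ) - 1 ≠ 0 := by intro h; apply h1n; linarith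
  field_simp
  ring
end

section
/- For every nonzero integer k, the negative continued fraction identity (6k+2)/3 = [[2k, −2, −2]] holds, and consequently σ(3, 6k+2, −1) = 2 − sgn(k). -/
section
open Complex Finset

noncomputable def zt (m : ℕ) : ℂ := Complex.exp (2 * Real.pi * I / m)

lemma zt_pow_m (m : ℕ) (hm : 0 < m) : zt m ^ m = 1 := by
  rw [zt, ← Complex.exp_nat_mul]
  have : (m:ℂ) ≠ 0 := Nat.cast_ne_zero.2 hm.ne'
  rw [mul_div_cancel₀ _ this, Complex.exp_two_pi_mul_I]

lemma two_pi_I_ne : (2:ℂ) * Real.pi * I ≠ 0 := by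
  simp [Complex.I_ne_zero, Complex.ofReal_ne_zero, Real.pi_ne_zero]

lemma zt_pow_eq_one_iff (m : ℕ) (hm : 0 < m) (s : ℕ) :
    zt m ^ s = 1 ↔ (m:ℤ) ∣ (s:ℤ) := by
  have hmC : (m:ℂ) ≠ 0 := Nat.cast_ne_zero.2 hm.ne'
  rw [zt, ← Complex.exp_nat_mul, Complex.exp_eq_one_iff]
  constructor
  · rintro ⟨n, hn⟩
    field_simp at hn
    have key : (s:ℂ) = n * m := by
      apply mul_right_cancel₀ two_pi_I_ne
      linear_combination (2 * Real.pi * I) * hn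
    have : (s:ℤ) = n * m := by exact_mod_cast key
    exact ⟨n, by linarith⟩
  · rintro ⟨n, hn⟩
    refine ⟨n, ?_⟩
    have : (s:ℂ) = m * n := by exact_mod_cast hn
    field_simp [this]
    exact this

lemma orth_s15 (m : ℕ) (hm : 0 < m) (s : ℕ) :
    ∑ j ∈ range m, (zt m ^ s) ^ j = if (m:ℤ) ∣ (s:ℤ) then (m:ℂ) else 0 := by
  by_cases h : (m:ℤ) ∣ (s:ℤ)
  · rw [if_pos h, (zt_pow_eq_one_iff m hm s).2 h]
    simp
  · rw [if_neg h, geom_sum_eq (fun hc => h ((zt_pow_eq_one_iff m hm s).1 hc)) m]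
    have : (zt m ^ s) ^ m = 1 := by
      rw [← pow_mul, mul_comm, pow_mul, zt_pow_m m hm, one_pow]
    simp [this]


-- general ring identity
lemma sum_mul_pow (m : ℕ) (u : ℂ) :
    (∑ t ∈ range m, (t:ℂ) * u ^ t) * (u - 1)
      = ((m:ℂ) - 1) * u ^ m - (∑ t ∈ range m, u ^ t) + 1 := by
  induction m with
  | zero => simp
  | succ n ih =>
    rw [Finset.sum_range_succ, Finset.sum_range_succ]
    push_cast
    linear_combination ih

lemma Skey (m : ℕ) (u : ℂ) (hu : u ^ m = 1) (hne : u ≠ 1) :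
    (∑ t ∈ range m, (t:ℂ) * u ^ t) * (u - 1) = (m:ℂ) := by
  have hg : ∑ t ∈ range m, u ^ t = 0 := by
    rw [geom_sum_eq hne, hu]; simp
  rw [sum_mul_pow, hu, hg]; ring

lemma gaussA (m : ℕ) : ∑ t ∈ range m, (t:ℂ) = (m:ℂ) * ((m:ℂ) - 1) / 2 := by
  induction m with
  | zero => simp
  | succ n ih =>
    rw [Finset.sum_range_succ]
    push_cast
    linear_combination ih

lemma gaussB (m : ℕ) : ∑ t ∈ range m, (t:ℂ)^2 = (m:ℂ) * ((m:ℂ) - 1) * (2*(m:ℂ) - 1) / 6 := by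
  induction m with
  | zero => simp
  | succ n ih =>
    rw [Finset.sum_range_succ]
    push_cast
    linear_combination ih


lemma zt_pow_eq_one_iff' (m : ℕ) (hm : 0 < m) (s : ℕ) : zt m ^ s = 1 ↔ m ∣ s := by
  rw [zt_pow_eq_one_iff m hm s, Int.natCast_dvd_natCast]

lemma orth' (m : ℕ) (hm : 0 < m) (s : ℕ) :
    ∑ j ∈ range m, (zt m ^ s) ^ j = if m ∣ s then (m:ℂ) else 0 := by
  rw [orth_s15 m hm s]
  simp [Int.natCast_dvd_natCast]

lemma orthIcc (m : ℕ) (hm : 0 < m) (s : ℕ) :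
    ∑ j ∈ Icc 1 (m-1), (zt m ^ s) ^ j = (if m ∣ s then (m:ℂ) else 0) - 1 := by
  have hins : insert 0 (Icc 1 (m-1)) = range m := by
    ext x; simp [Finset.mem_range, Finset.mem_Icc]; omega
  have h0 : (0:ℕ) ∉ Icc 1 (m-1) := by simp
  have := orth' m hm s
  rw [← hins, Finset.sum_insert h0] at this
  simp only [pow_zero] at this
  linear_combination this

lemma zt_ne_one (m j : ℕ) (hm : 0 < m) (h1 : 1 ≤ j) (h2 : j < m) : zt m ^ j ≠ 1 := by
  intro hone
  have h := (zt_pow_eq_one_iff' m hm j).1 hone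
  have := Nat.le_of_dvd (by omega) h
  omega

lemma zt_pow_pow_m (m j : ℕ) (hm : 0 < m) : (zt m ^ j) ^ m = 1 := by
  rw [← pow_mul, mul_comm, pow_mul, zt_pow_m m hm, one_pow]

lemma inner_div (m t : ℕ) (hm : 0 < m) (ht : t < m) :
    ∑ t' ∈ range m, (t':ℂ) * (if m ∣ (t + t' + 1) then (m:ℂ) else 0)
      = (m:ℂ) * ((m:ℂ) - 1 - (t:ℂ)) := by
  rw [Finset.sum_eq_single (m - 1 - t)]
  · have hd : m ∣ (t + (m - 1 - t) + 1) := by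
      have : t + (m - 1 - t) + 1 = m := by omega
      simp [this]
    rw [if_pos hd]
    have : ((m - 1 - t : ℕ) : ℂ) = (m:ℂ) - 1 - (t:ℂ) := by
      push_cast [Nat.cast_sub (by omega : t ≤ m - 1), Nat.cast_sub (by omega : 1 ≤ m)]
      ring
    rw [this]; ring
  · intro t' ht' hne
    rw [Finset.mem_range] at ht'
    rw [if_neg, mul_zero]
    intro hd
    have h1 : t + t' + 1 ≠ 0 := by omega
    have h2 : t + t' + 1 < 2 * m := by omega
    have := Nat.eq_of_dvd_of_lt_two_mul h1 hd h2
    omega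
  · intro h
    exfalso; apply h
    rw [Finset.mem_range]; omega

lemma swap_eval (m : ℕ) (hm : 0 < m) (c : ℕ → ℕ → ℂ) (e : ℕ → ℕ → ℕ) :
    ∑ j ∈ Icc 1 (m-1), ∑ t ∈ range m, ∑ t' ∈ range m, c t t' * (zt m ^ (e t t')) ^ j
      = ∑ t ∈ range m, ∑ t' ∈ range m, c t t' * ((if m ∣ e t t' then (m:ℂ) else 0) - 1) := by
  rw [Finset.sum_comm]
  apply Finset.sum_congr rfl; intro t _
  rw [Finset.sum_comm]
  apply Finset.sum_congr rfl; intro t' _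
  rw [← Finset.mul_sum, orthIcc m hm]

lemma CL1 (m : ℕ) (hm : 0 < m) :
    ∑ j ∈ Icc 1 (m-1), (-2) * zt m ^ j / (zt m ^ j - 1)^2 = ((m:ℂ)^2 - 1)/6 := by
  have hmC : (m:ℂ) ≠ 0 := Nat.cast_ne_zero.2 hm.ne'
  have step1 : ∀ j ∈ Icc 1 (m-1), (-2) * zt m ^ j / (zt m ^ j - 1)^2
      = ∑ t ∈ range m, ∑ t' ∈ range m,
          ((-2)/(m:ℂ)^2 * ((t:ℂ)*(t':ℂ))) * (zt m ^ (t+t'+1)) ^ j := by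
    intro j hj
    rw [Finset.mem_Icc] at hj
    have hj2 : j < m := by omega
    have hu : (zt m ^ j) ^ m = 1 := zt_pow_pow_m m j hm
    have hne : zt m ^ j ≠ 1 := zt_ne_one m j hm hj.1 hj2
    have hk := Skey m (zt m ^ j) hu hne
    have hu1 : zt m ^ j - 1 ≠ 0 := sub_ne_zero.2 hne
    have leg1 : (-2) * zt m ^ j / (zt m ^ j - 1)^2
        = (-2)/((m:ℂ)^2) * zt m ^ j * ((∑ t ∈ range m, (t:ℂ) * (zt m ^ j) ^ t)
            * (∑ t ∈ range m, (t:ℂ) * (zt m ^ j) ^ t)) := by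
      field_simp
      linear_combination (zt m ^ j * ((m:ℂ)
        + (∑ t ∈ range m, (t:ℂ) * (zt m ^ j) ^ t) * (zt m ^ j - 1))) * hk
    rw [leg1, Finset.sum_mul_sum, Finset.mul_sum]
    apply Finset.sum_congr rfl; intro t _
    rw [Finset.mul_sum]
    apply Finset.sum_congr rfl; intro t' _
    have hp : (zt m ^ (t+t'+1)) ^ j = (zt m ^ j)^t * (zt m ^ j)^t' * zt m ^ j := by
      have he : (t+t'+1)*j = j*t + (j*t' + j) := by ring
      rw [← pow_mul, he, pow_add, pow_add, pow_mul, pow_mul]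
      ring
    rw [hp]; ring
  rw [Finset.sum_congr rfl step1, swap_eval m hm]
  have e1 : ∀ t ∈ range m,
      ∑ t' ∈ range m, ((-2)/(m:ℂ)^2 * ((t:ℂ)*(t':ℂ))) * ((if m ∣ (t+t'+1) then (m:ℂ) else 0) - 1)
        = (-((m:ℂ)-1)/(m:ℂ)) * (t:ℂ) + (2/(m:ℂ)) * (t:ℂ)^2 := by
    intro t ht
    rw [Finset.mem_range] at ht
    calc ∑ t' ∈ range m, ((-2)/(m:ℂ)^2 * ((t:ℂ)*(t':ℂ))) * ((if m ∣ (t+t'+1) then (m:ℂ) else 0) - 1)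
        = ∑ t' ∈ range m, ((-2)/(m:ℂ)^2 * (t:ℂ) * ((t':ℂ) * (if m ∣ (t+t'+1) then (m:ℂ) else 0))
            - (-2)/(m:ℂ)^2 * (t:ℂ) * (t':ℂ)) := by
          apply Finset.sum_congr rfl; intro t' _; ring
      _ = (-2)/(m:ℂ)^2 * (t:ℂ) * (∑ t' ∈ range m, (t':ℂ) * (if m ∣ (t+t'+1) then (m:ℂ) else 0))
            - (-2)/(m:ℂ)^2 * (t:ℂ) * (∑ t' ∈ range m, (t':ℂ)) := by
          rw [Finset.sum_sub_distrib, ← Finset.mul_sum, ← Finset.mul_sum]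
      _ = _ := by rw [inner_div m t hm ht, gaussA m]; field_simp; ring
  rw [Finset.sum_congr rfl e1, Finset.sum_add_distrib, ← Finset.mul_sum, ← Finset.mul_sum,
    gaussA m, gaussB m]
  field_simp
  ring

lemma inner_div3 (m a t₀ : ℕ) (ht0 : t₀ < m) (hd : m ∣ (3*t₀ + a))
    (huniq : ∀ t, t < m → m ∣ (3*t + a) → t = t₀) :
    ∑ t ∈ range m, (t:ℂ) * (if m ∣ (3*t + a) then (m:ℂ) else 0) = (m:ℂ) * (t₀:ℂ) := by
  rw [Finset.sum_eq_single t₀]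
  · rw [if_pos hd]; ring
  · intro t ht hne
    rw [Finset.mem_range] at ht
    rw [if_neg, mul_zero]
    exact fun h => hne (huniq t ht h)
  · intro h; exact absurd (Finset.mem_range.2 ht0) h

lemma CL2 (m : ℕ) (hm : 0 < m) (t₁ t₂ : ℕ) (ht1 : t₁ < m) (ht2 : t₂ < m)
    (hd1 : m ∣ 3*t₁+1) (hd2 : m ∣ 3*t₂+2)
    (hu1 : ∀ t, t < m → m ∣ (3*t+1) → t = t₁) (hu2 : ∀ t, t < m → m ∣ (3*t+2) → t = t₂)
    (h3 : ∀ j, 1 ≤ j → j < m → ¬ m ∣ 3*j) :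
    ∑ j ∈ Icc 1 (m-1), zt m ^ j * (zt m ^ j - 1) / ((zt m ^ j)^3 - 1)
      = (t₂:ℂ) - (t₁:ℂ) := by
  have hmC : (m:ℂ) ≠ 0 := Nat.cast_ne_zero.2 hm.ne'
  have step1 : ∀ j ∈ Icc 1 (m-1), zt m ^ j * (zt m ^ j - 1) / ((zt m ^ j)^3 - 1)
      = ∑ t ∈ range m, ((1/(m:ℂ)) * (t:ℂ)) * ((zt m ^ (3*t+2)) ^ j - (zt m ^ (3*t+1)) ^ j) := by
    intro j hj
    rw [Finset.mem_Icc] at hj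
    have hj2 : j < m := by omega
    have hw : (zt m ^ (3*j)) ^ m = 1 := zt_pow_pow_m m (3*j) hm
    have hwne : zt m ^ (3*j) ≠ 1 := by
      intro h
      exact h3 j hj.1 hj2 ((zt_pow_eq_one_iff' m hm (3*j)).1 h)
    have hk := Skey m (zt m ^ (3*j)) hw hwne
    have hw1 : zt m ^ (3*j) - 1 ≠ 0 := sub_ne_zero.2 hwne
    have hcube : (zt m ^ j)^3 = zt m ^ (3*j) := by
      rw [← pow_mul, mul_comm]
    rw [hcube]
    have leg1 : zt m ^ j * (zt m ^ j - 1) / (zt m ^ (3*j) - 1)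
        = (1/(m:ℂ)) * (zt m ^ j * (zt m ^ j - 1)) * (∑ t ∈ range m, (t:ℂ) * (zt m ^ (3*j)) ^ t) := by
      field_simp
      linear_combination (-(zt m ^ j * (zt m ^ j - 1))) * hk
    rw [leg1, Finset.mul_sum]
    apply Finset.sum_congr rfl; intro t _
    have e1 : (zt m ^ (3*t+2)) ^ j = (zt m ^ j)^2 * (zt m ^ (3*j)) ^ t := by
      have he : (3*t+2)*j = j*2 + 3*j*t := by ring
      rw [← pow_mul, he, pow_add, pow_mul, pow_mul]
    have e2 : (zt m ^ (3*t+1)) ^ j = zt m ^ j * (zt m ^ (3*j)) ^ t := by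
      have he : (3*t+1)*j = j + 3*j*t := by ring
      rw [← pow_mul, he, pow_add, pow_mul]
    rw [e1, e2]; ring
  rw [Finset.sum_congr rfl step1, Finset.sum_comm]
  have e3 : ∀ t ∈ range m, ∑ j ∈ Icc 1 (m-1),
      ((1/(m:ℂ)) * (t:ℂ)) * ((zt m ^ (3*t+2)) ^ j - (zt m ^ (3*t+1)) ^ j)
      = (1/(m:ℂ)) * ((t:ℂ) * (if m ∣ (3*t+2) then (m:ℂ) else 0))
        - (1/(m:ℂ)) * ((t:ℂ) * (if m ∣ (3*t+1) then (m:ℂ) else 0)) := by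
    intro t _
    rw [← Finset.mul_sum, Finset.sum_sub_distrib, orthIcc m hm, orthIcc m hm]
    ring
  rw [Finset.sum_congr rfl e3, Finset.sum_sub_distrib, ← Finset.mul_sum, ← Finset.mul_sum,
    inner_div3 m 2 t₂ ht2 hd2 hu2, inner_div3 m 1 t₁ ht1 hd1 hu1]
  field_simp

lemma zt_exp (m j : ℕ) (hm : 0 < m) :
    zt m ^ j = Complex.exp (((2*Real.pi*j/m : ℝ):ℂ) * I) := by
  have hmC : (m:ℂ) ≠ 0 := Nat.cast_ne_zero.2 hm.ne'
  rw [zt, ← Complex.exp_nat_mul]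
  congr 1
  push_cast
  field_simp

lemma zt_cos (m j : ℕ) (hm : 0 < m) :
    ((Real.cos (2*Real.pi*j/m) : ℝ) : ℂ) = (zt m ^ j + (zt m ^ j)⁻¹)/2 := by
  rw [Complex.ofReal_cos, zt_exp m j hm, ← Complex.exp_neg]
  have := Complex.two_cos (((2*Real.pi*j/m : ℝ):ℂ))
  rw [neg_mul] at this
  linear_combination this / 2

lemma zt_ne_zero (m j : ℕ) : zt m ^ j ≠ 0 := by
  rw [zt, ← Complex.exp_nat_mul]; exact Complex.exp_ne_zero _

lemma RB1 (m j : ℕ) (hm : 0 < m) (h1 : 1 ≤ j) (h2 : j < m) :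
    ((1/(1 - Real.cos (2*Real.pi*j/m)) : ℝ) : ℂ)
      = (-2) * zt m ^ j / (zt m ^ j - 1)^2 := by
  have hne := zt_ne_one m j hm h1 h2
  have h0 := zt_ne_zero m j
  have hu1 : zt m ^ j - 1 ≠ 0 := sub_ne_zero.2 hne
  rw [Complex.ofReal_div, Complex.ofReal_one, Complex.ofReal_sub, Complex.ofReal_one,
    zt_cos m j hm]
  have hd : (1:ℂ) - (zt m ^ j + (zt m ^ j)⁻¹)/2 = -(zt m ^ j - 1)^2/(2 * zt m ^ j) := by
    field_simp
    ring
  rw [hd]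
  rw [one_div_div, div_neg]
  ring

lemma RS1 (m : ℕ) (hm : 0 < m) :
    ∑ j ∈ Icc 1 (m-1), (1/(1 - Real.cos (2*Real.pi*j/m)) : ℝ) = ((m:ℝ)^2 - 1)/6 := by
  have key : ((∑ j ∈ Icc 1 (m-1), (1/(1 - Real.cos (2*Real.pi*j/m)) : ℝ) : ℝ) : ℂ)
      = (((m:ℝ)^2 - 1)/6 : ℝ) := by
    have e : ∀ j ∈ Icc 1 (m-1), ((1/(1 - Real.cos (2*Real.pi*j/m)) : ℝ) : ℂ)
        = (-2) * zt m ^ j / (zt m ^ j - 1)^2 := by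
      intro j hj
      rw [Finset.mem_Icc] at hj
      exact RB1 m j hm hj.1 (by omega)
    rw [Complex.ofReal_sum, Finset.sum_congr rfl e, CL1 m hm]
    push_cast
    ring
  exact_mod_cast key

lemma RB2 (m j : ℕ) (hm : 0 < m) (h1 : 1 ≤ j) (h2 : j < m)
    (hc : (zt m ^ j)^3 ≠ 1) :
    ((1/(1 + 2*Real.cos (2*Real.pi*j/m)) : ℝ) : ℂ)
      = zt m ^ j * (zt m ^ j - 1) / ((zt m ^ j)^3 - 1) := by
  have hne := zt_ne_one m j hm h1 h2
  have h0 := zt_ne_zero m j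
  have h3 : (zt m ^ j)^3 - 1 ≠ 0 := sub_ne_zero.2 hc
  have hq : (zt m ^ j)^2 + zt m ^ j + 1 ≠ 0 := by
    intro h
    exact h3 (by linear_combination (zt m ^ j - 1) * h)
  rw [Complex.ofReal_div, Complex.ofReal_one, Complex.ofReal_add, Complex.ofReal_one,
    Complex.ofReal_mul, Complex.ofReal_ofNat, zt_cos m j hm]
  have hd : (1:ℂ) + 2*((zt m ^ j + (zt m ^ j)⁻¹)/2)
      = ((zt m ^ j)^2 + zt m ^ j + 1)/(zt m ^ j) := by
    field_simp
    ring
  rw [hd, one_div_div]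
  rw [div_eq_div_iff hq h3]
  ring

lemma RS2 (m : ℕ) (hm : 0 < m) (t₁ t₂ : ℕ) (ht1 : t₁ < m) (ht2 : t₂ < m)
    (hd1 : m ∣ 3*t₁+1) (hd2 : m ∣ 3*t₂+2)
    (hu1 : ∀ t, t < m → m ∣ (3*t+1) → t = t₁) (hu2 : ∀ t, t < m → m ∣ (3*t+2) → t = t₂)
    (h3 : ∀ j, 1 ≤ j → j < m → ¬ m ∣ 3*j) :
    ∑ j ∈ Icc 1 (m-1), (1/(1 + 2*Real.cos (2*Real.pi*j/m)) : ℝ) = (t₂:ℝ) - (t₁:ℝ) := by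
  have key : ((∑ j ∈ Icc 1 (m-1), (1/(1 + 2*Real.cos (2*Real.pi*j/m)) : ℝ) : ℝ) : ℂ)
      = ((t₂:ℝ) - (t₁:ℝ) : ℝ) := by
    have e : ∀ j ∈ Icc 1 (m-1), ((1/(1 + 2*Real.cos (2*Real.pi*j/m)) : ℝ) : ℂ)
        = zt m ^ j * (zt m ^ j - 1) / ((zt m ^ j)^3 - 1) := by
      intro j hj
      rw [Finset.mem_Icc] at hj
      have hjm : j < m := by omega
      apply RB2 m j hm hj.1 hjm
      intro h
      have hcube : zt m ^ (3*j) = 1 := by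
        rw [← h, ← pow_mul, mul_comm]
      exact h3 j hj.1 hjm ((zt_pow_eq_one_iff' m hm (3*j)).1 hcube)
    rw [Complex.ofReal_sum, Finset.sum_congr rfl e,
      CL2 m hm t₁ t₂ ht1 ht2 hd1 hd2 hu1 hu2 h3]
    push_cast
    ring
  exact_mod_cast key

lemma cbound (m c x : ℕ) (h : x < 3*m) (hc : x = m * c) : c < 3 := by
  by_contra hh
  push_neg at hh
  have : m * 3 ≤ m * c := Nat.mul_le_mul_left m hh
  omega

lemma RS2a (m r : ℕ) (hmr : m = 3*r+1) :
    ∑ j ∈ Icc 1 (m-1), (1/(1 + 2*Real.cos (2*Real.pi*j/m)) : ℝ) = (r:ℝ) := by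
  subst hmr
  have h := RS2 (3*r+1) (by omega) r (2*r) (by omega) (by omega)
    ⟨1, by ring⟩ ⟨2, by ring⟩
    (fun t ht hd => by
      obtain ⟨c, hc⟩ := hd
      have hc3 : c < 3 := cbound (3*r+1) c _ (by omega) hc
      interval_cases c <;> omega)
    (fun t ht hd => by
      obtain ⟨c, hc⟩ := hd
      have hc3 : c < 3 := cbound (3*r+1) c _ (by omega) hc
      interval_cases c <;> omega)
    (fun j hj1 hj2 hd => by
      obtain ⟨c, hc⟩ := hd
      have hc3 : c < 3 := cbound (3*r+1) c _ (by omega) hc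
      interval_cases c <;> omega)
  rw [h]
  push_cast
  ring

lemma RS2b (m r : ℕ) (hmr : m = 3*r+2) :
    ∑ j ∈ Icc 1 (m-1), (1/(1 + 2*Real.cos (2*Real.pi*j/m)) : ℝ) = -((r:ℝ)+1) := by
  subst hmr
  have h := RS2 (3*r+2) (by omega) (2*r+1) r (by omega) (by omega)
    ⟨2, by ring⟩ ⟨1, by ring⟩
    (fun t ht hd => by
      obtain ⟨c, hc⟩ := hd
      have hc3 : c < 3 := cbound (3*r+2) c _ (by omega) hc
      interval_cases c <;> omega)
    (fun t ht hd => by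
      obtain ⟨c, hc⟩ := hd
      have hc3 : c < 3 := cbound (3*r+2) c _ (by omega) hc
      interval_cases c <;> omega)
    (fun j hj1 hj2 hd => by
      obtain ⟨c, hc⟩ := hd
      have hc3 : c < 3 := cbound (3*r+2) c _ (by omega) hc
      interval_cases c <;> omega)
  rw [h]
  push_cast
  ring


lemma TID (x ε : ℝ) (hs : Real.sin x ≠ 0) (hs3 : Real.sin (3*x) ≠ 0) :
    Real.cos x / Real.sin x * (Real.cos (3*x) / Real.sin (3*x))
      + 2 * ε * ((1/Real.sin x) * (1/Real.sin (3*x)))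
    = -1 + (2+4*ε)/(3*(1 - Real.cos (2*x))) + (2/3)*(4*ε-1)/(1 + 2*Real.cos (2*x)) := by
  have hpy := Real.sin_sq_add_cos_sq x
  have key : Real.cos x * Real.cos (3*x) = (1 - Real.sin x^2)*(1-4*Real.sin x^2) := by
    rw [Real.cos_three_mul]
    linear_combination (4*Real.cos x^2 + 1 - 4*Real.sin x^2) * hpy
  have d1 : 1 - Real.cos (2*x) = 2*Real.sin x^2 := by
    rw [Real.cos_two_mul']
    linear_combination -hpy
  have d2 : 1 + 2*Real.cos (2*x) = 3 - 4*Real.sin x^2 := by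
    rw [Real.cos_two_mul']
    linear_combination 2*hpy
  have hd2 : (3:ℝ) - 4*Real.sin x^2 ≠ 0 := by
    intro h
    apply hs3
    rw [Real.sin_three_mul]
    linear_combination Real.sin x * h
  have hs3' : 3*Real.sin x - 4*Real.sin x^3 ≠ 0 := by
    rw [← Real.sin_three_mul]; exact hs3
  rw [div_mul_div_comm, key, Real.sin_three_mul, d1, d2]
  have hd2' : (3:ℝ) - Real.sin x^2 * 4 ≠ 0 := by rw [mul_comm]; exact hd2
  field_simp
  ring

lemma EPS (m : ℕ) (f : ℕ → ℝ) :
    ∑ j ∈ Icc 1 (2*m-1), (-1:ℝ)^j * f j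
      = 2*(∑ i ∈ Icc 1 (m-1), f (2*i)) - ∑ j ∈ Icc 1 (2*m-1), f j := by
  have h1 : ∑ j ∈ Icc 1 (2*m-1), ((-1:ℝ)^j * f j + f j)
      = ∑ j ∈ Icc 1 (2*m-1), (if Even j then 2*f j else 0) := by
    apply Finset.sum_congr rfl; intro j _
    rcases Nat.even_or_odd j with h | h
    · rw [if_pos h, h.neg_one_pow]; ring
    · rw [if_neg (by simpa using h), h.neg_one_pow]; ring
  have h2 : ∑ j ∈ Icc 1 (2*m-1), (if Even j then 2*f j else 0)
      = ∑ i ∈ Icc 1 (m-1), 2 * f (2*i) := by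
    rw [← Finset.sum_filter]
    refine Finset.sum_nbij' (fun j => j/2) (fun i => 2*i) ?_ ?_ ?_ ?_ ?_
    · intro a ha
      simp only [Finset.mem_filter, Finset.mem_Icc, Nat.even_iff] at ha
      simp only [Finset.mem_Icc]
      omega
    · intro a ha
      simp only [Finset.mem_Icc] at ha
      simp only [Finset.mem_filter, Finset.mem_Icc, Nat.even_iff]
      omega
    · intro a ha
      simp only [Finset.mem_filter, Finset.mem_Icc, Nat.even_iff] at ha
      omega
    · intro a ha
      omega
    · intro a ha
      simp only [Finset.mem_filter, Finset.mem_Icc, Nat.even_iff] at ha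
      have h2a : 2 * (a / 2) = a := by omega
      rw [h2a]
  rw [Finset.sum_add_distrib, h2] at h1
  have h3 : ∑ i ∈ Icc 1 (m-1), 2 * f (2*i) = 2*(∑ i ∈ Icc 1 (m-1), f (2*i)) := by
    rw [Finset.mul_sum]
  rw [h3] at h1
  linarith


lemma TID' (x ε : ℝ) (hs : Real.sin x ≠ 0) (hs3 : Real.sin (3*x) ≠ 0) :
    Real.cos x / Real.sin x * (Real.cos (3*x) / Real.sin (3*x))
      + 2 * ε * ((1/Real.sin x) * (1/Real.sin (3*x)))
    = -1 + (2/3)*(1/(1 - Real.cos (2*x))) + (4/3)*(ε*(1/(1 - Real.cos (2*x))))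
      - (2/3)*(1/(1 + 2*Real.cos (2*x))) + (8/3)*(ε*(1/(1 + 2*Real.cos (2*x)))) := by
  have hpy := Real.sin_sq_add_cos_sq x
  have key : Real.cos x * Real.cos (3*x) = (1 - Real.sin x^2)*(1-4*Real.sin x^2) := by
    rw [Real.cos_three_mul]
    linear_combination (4*Real.cos x^2 + 1 - 4*Real.sin x^2) * hpy
  have d1 : 1 - Real.cos (2*x) = 2*Real.sin x^2 := by
    rw [Real.cos_two_mul']
    linear_combination -hpy
  have d2 : 1 + 2*Real.cos (2*x) = 3 - 4*Real.sin x^2 := by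
    rw [Real.cos_two_mul']
    linear_combination 2*hpy
  have hd2 : (3:ℝ) - 4*Real.sin x^2 ≠ 0 := by
    intro h
    apply hs3
    rw [Real.sin_three_mul]
    linear_combination Real.sin x * h
  have hs3' : 3*Real.sin x - 4*Real.sin x^3 ≠ 0 := by
    rw [← Real.sin_three_mul]; exact hs3
  rw [div_mul_div_comm, key, Real.sin_three_mul, d1, d2]
  have hd2' : (3:ℝ) - Real.sin x^2 * 4 ≠ 0 := by rw [mul_comm]; exact hd2
  field_simp
  ring

lemma int_mul_bound (t N j : ℤ) (hN : 0 < N) (h1 : 1 ≤ j) (h2 : j < N) (he : t * N = j) :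
    False := by
  rcases le_or_gt t 0 with h | h
  · nlinarith
  · nlinarith

lemma MAIN_CORE (m : ℕ) (hm : 0 < m)
    (h3n : ∀ j, 1 ≤ j → j < 2*m → ¬ (2*m) ∣ (3*j)) :
    ∑ j ∈ Icc 1 (2*m-1),
      (Real.cos (Real.pi*j/((2*m:ℕ):ℝ))/Real.sin (Real.pi*j/((2*m:ℕ):ℝ))
        * (Real.cos (Real.pi*j*3/((2*m:ℕ):ℝ))/Real.sin (Real.pi*j*3/((2*m:ℕ):ℝ)))
        + 2*(-1:ℝ)^j*((1/Real.sin (Real.pi*j/((2*m:ℕ):ℝ)))*(1/Real.sin (Real.pi*j*3/((2*m:ℕ):ℝ)))))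
    = -(((2*m:ℕ):ℝ)-1)
      + (2/3)*(∑ j ∈ Icc 1 (2*m-1), (1/(1-Real.cos (2*Real.pi*j/((2*m:ℕ):ℝ))) : ℝ))
      + (4/3)*(2*(∑ i ∈ Icc 1 (m-1), (1/(1-Real.cos (2*Real.pi*i/(m:ℝ))) : ℝ))
               - ∑ j ∈ Icc 1 (2*m-1), (1/(1-Real.cos (2*Real.pi*j/((2*m:ℕ):ℝ))) : ℝ))
      - (2/3)*(∑ j ∈ Icc 1 (2*m-1), (1/(1+2*Real.cos (2*Real.pi*j/((2*m:ℕ):ℝ))) : ℝ))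
      + (8/3)*(2*(∑ i ∈ Icc 1 (m-1), (1/(1+2*Real.cos (2*Real.pi*i/(m:ℝ))) : ℝ))
               - ∑ j ∈ Icc 1 (2*m-1), (1/(1+2*Real.cos (2*Real.pi*j/((2*m:ℕ):ℝ))) : ℝ)) := by
  have hmR : (m:ℝ) ≠ 0 := Nat.cast_ne_zero.2 hm.ne'
  have hnR : ((2*m:ℕ):ℝ) ≠ 0 := Nat.cast_ne_zero.2 (by omega)
  have hπ := Real.pi_ne_zero
  have hsin : ∀ j : ℕ, 1 ≤ j → j < 2*m → Real.sin (Real.pi*j/((2*m:ℕ):ℝ)) ≠ 0 := by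
    intro j h1 h2 h
    rw [Real.sin_eq_zero_iff] at h
    obtain ⟨t, ht⟩ := h
    have key : (t:ℝ) * (2*(m:ℝ)) = (j:ℝ) := by
      apply mul_left_cancel₀ hπ
      field_simp at ht
      push_cast at ht
      linear_combination Real.pi * ht
    have key2 : t * (2*(m:ℤ)) = (j:ℤ) := by exact_mod_cast key
    exact int_mul_bound t (2*(m:ℤ)) j (by omega) (by omega) (by omega) key2
  have hsin3 : ∀ j : ℕ, 1 ≤ j → j < 2*m → Real.sin (3*(Real.pi*j/((2*m:ℕ):ℝ))) ≠ 0 := by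
    intro j h1 h2 h
    rw [Real.sin_eq_zero_iff] at h
    obtain ⟨t, ht⟩ := h
    have key : (t:ℝ) * (2*(m:ℝ)) = 3*(j:ℝ) := by
      apply mul_left_cancel₀ hπ
      field_simp at ht
      push_cast at ht
      linear_combination Real.pi * ht
    have key2 : t * (2*(m:ℤ)) = 3*(j:ℤ) := by exact_mod_cast key
    apply h3n j h1 h2
    have hdvd : ((2*m:ℕ):ℤ) ∣ ((3*j:ℕ):ℤ) := ⟨t, by push_cast; linarith [key2]⟩
    exact_mod_cast hdvd
  have step1 : ∀ j ∈ Icc 1 (2*m-1),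
      Real.cos (Real.pi*j/((2*m:ℕ):ℝ))/Real.sin (Real.pi*j/((2*m:ℕ):ℝ))
        * (Real.cos (Real.pi*j*3/((2*m:ℕ):ℝ))/Real.sin (Real.pi*j*3/((2*m:ℕ):ℝ)))
        + 2*(-1:ℝ)^j*((1/Real.sin (Real.pi*j/((2*m:ℕ):ℝ)))*(1/Real.sin (Real.pi*j*3/((2*m:ℕ):ℝ))))
      = -1 + (2/3)*(1/(1 - Real.cos (2*Real.pi*j/((2*m:ℕ):ℝ))))
        + (4/3)*((-1:ℝ)^j*(1/(1 - Real.cos (2*Real.pi*j/((2*m:ℕ):ℝ)))))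
        - (2/3)*(1/(1 + 2*Real.cos (2*Real.pi*j/((2*m:ℕ):ℝ))))
        + (8/3)*((-1:ℝ)^j*(1/(1 + 2*Real.cos (2*Real.pi*j/((2*m:ℕ):ℝ))))) := by
    intro j hj
    rw [Finset.mem_Icc] at hj
    have h1 := hj.1
    have h2 : j < 2*m := by omega
    have e3 : Real.pi*j*3/((2*m:ℕ):ℝ) = 3*(Real.pi*j/((2*m:ℕ):ℝ)) := by ring
    have e2 : 2*Real.pi*(j:ℝ)/((2*m:ℕ):ℝ) = 2*(Real.pi*j/((2*m:ℕ):ℝ)) := by ring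
    rw [e3, e2, TID' (Real.pi*j/((2*m:ℕ):ℝ)) ((-1:ℝ)^j) (hsin j h1 h2) (hsin3 j h1 h2)]
  rw [Finset.sum_congr rfl step1]
  simp only [Finset.sum_add_distrib, Finset.sum_sub_distrib, Finset.sum_const, Nat.card_Icc]
  rw [← Finset.mul_sum, ← Finset.mul_sum, ← Finset.mul_sum, ← Finset.mul_sum]
  rw [EPS m (fun j => 1/(1 - Real.cos (2*Real.pi*j/((2*m:ℕ):ℝ)))),
      EPS m (fun j => 1/(1 + 2*Real.cos (2*Real.pi*j/((2*m:ℕ):ℝ))))]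
  have half1 : ∑ i ∈ Icc 1 (m-1), (1/(1-Real.cos (2*Real.pi*((2*i:ℕ):ℝ)/((2*m:ℕ):ℝ))) : ℝ)
      = ∑ i ∈ Icc 1 (m-1), (1/(1-Real.cos (2*Real.pi*i/(m:ℝ))) : ℝ) := by
    apply Finset.sum_congr rfl
    intro i _
    have e : (2*Real.pi*((2*i:ℕ):ℝ)/((2*m:ℕ):ℝ)) = 2*Real.pi*(i:ℝ)/(m:ℝ) := by
      rw [div_eq_div_iff hnR hmR]; push_cast; ring
    rw [e]
  have half2 : ∑ i ∈ Icc 1 (m-1), (1/(1+2*Real.cos (2*Real.pi*((2*i:ℕ):ℝ)/((2*m:ℕ):ℝ))) : ℝ)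
      = ∑ i ∈ Icc 1 (m-1), (1/(1+2*Real.cos (2*Real.pi*i/(m:ℝ))) : ℝ) := by
    apply Finset.sum_congr rfl
    intro i _
    have e : (2*Real.pi*((2*i:ℕ):ℝ)/((2*m:ℕ):ℝ)) = 2*Real.pi*(i:ℝ)/(m:ℝ) := by
      rw [div_eq_div_iff hnR hmR]; push_cast; ring
    rw [e]
  rw [half1, half2, nsmul_eq_mul]
  have hcard : ((2*m-1+1-1:ℕ):ℝ) = ((2*m:ℕ):ℝ) - 1 := by
    push_cast [Nat.cast_sub (by omega : 1 ≤ 2*m)]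
    ring
  rw [hcard]
  ring
lemma MAIN_A (m r : ℕ) (hmr : m = 3*r+1) :
    ∑ j ∈ Icc 1 (2*m-1),
      (Real.cos (Real.pi*j/((2*m:ℕ):ℝ))/Real.sin (Real.pi*j/((2*m:ℕ):ℝ))
        * (Real.cos (Real.pi*j*3/((2*m:ℕ):ℝ))/Real.sin (Real.pi*j*3/((2*m:ℕ):ℝ)))
        + 2*(-1:ℝ)^j*((1/Real.sin (Real.pi*j/((2*m:ℕ):ℝ)))*(1/Real.sin (Real.pi*j*3/((2*m:ℕ):ℝ)))))
    = ((2*m:ℕ):ℝ) := by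
  have hm : 0 < m := by omega
  have h3n : ∀ j, 1 ≤ j → j < 2*m → ¬ (2*m) ∣ (3*j) := by
    intro j h1 h2 hd
    obtain ⟨c, hc⟩ := hd
    have hc3 : c < 3 := cbound (2*m) c (3*j) (by omega) hc
    interval_cases c <;> omega
  rw [MAIN_CORE m hm h3n, RS1 (2*m) (by omega), RS1 m hm,
      RS2b (2*m) (2*r) (by omega), RS2a m r hmr]
  have h1 : ((2*m:ℕ):ℝ) = 6*(r:ℝ)+2 := by push_cast [hmr]; ring
  have h2 : ((m:ℕ):ℝ) = 3*(r:ℝ)+1 := by push_cast [hmr]; ring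
  rw [h1, h2]
  push_cast
  ring

lemma MAIN_B (m r : ℕ) (hmr : m = 3*r+2) :
    ∑ j ∈ Icc 1 (2*m-1),
      (Real.cos (Real.pi*j/((2*m:ℕ):ℝ))/Real.sin (Real.pi*j/((2*m:ℕ):ℝ))
        * (Real.cos (Real.pi*j*3/((2*m:ℕ):ℝ))/Real.sin (Real.pi*j*3/((2*m:ℕ):ℝ)))
        + 2*(-1:ℝ)^j*((1/Real.sin (Real.pi*j/((2*m:ℕ):ℝ)))*(1/Real.sin (Real.pi*j*3/((2*m:ℕ):ℝ)))))
    = -3*((2*m:ℕ):ℝ) := by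
  have hm : 0 < m := by omega
  have h3n : ∀ j, 1 ≤ j → j < 2*m → ¬ (2*m) ∣ (3*j) := by
    intro j h1 h2 hd
    obtain ⟨c, hc⟩ := hd
    have hc3 : c < 3 := cbound (2*m) c (3*j) (by omega) hc
    interval_cases c <;> omega
  rw [MAIN_CORE m hm h3n, RS1 (2*m) (by omega), RS1 m hm,
      RS2a (2*m) (2*r+1) (by omega), RS2b m r hmr]
  have h1 : ((2*m:ℕ):ℝ) = 6*(r:ℝ)+4 := by push_cast [hmr]; ring
  have h2 : ((m:ℕ):ℝ) = 3*(r:ℝ)+2 := by push_cast [hmr]; ring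
  rw [h1, h2]
  push_cast
  ring


end

/-- For `k ≠ 0`, `(6k+2)/3 = [[2k, -2, -2]]` and `σ(3, 6k+2, -1) = 2 - sgn k`. -/
theorem ncf_sigma_six_k_two (k : ℤ) (hk : k ≠ 0) :
    ncf [2 * k, -2, -2] = ((6 * k + 2 : ℤ) : ℚ) / 3 ∧
      sigmaFFU 3 (6 * k + 2) (-1) = 2 - ((Int.sign k : ℤ) : ℝ) := by
  constructor
  · simp only [ncf]
    push_cast
    norm_num
    ring
  · rcases hk.lt_or_gt with hneg | hpos
    · -- k < 0
      have hK : ((-k).toNat : ℤ) = -k := Int.toNat_of_nonneg (by omega)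
      set K := (-k).toNat with hKdef
      have hK1 : 1 ≤ K := by omega
      have hm : (6*k+2).natAbs = 2*(3*K-1) := by omega
      have hsign : Int.sign k = -1 := Int.sign_eq_neg_one_iff_neg.2 hneg
      have hKR : ((K:ℕ):ℝ) = -(k:ℝ) := by exact_mod_cast hK
      have hp : ((6*k+2 : ℤ):ℝ) = -(((2*(3*K-1):ℕ)):ℝ) := by
        push_cast [Nat.cast_sub (by omega : 1 ≤ 3*K)]
        rw [hKR]
        ring
      unfold sigmaFFU
      rw [hm, hsign, hp]
      simp only [div_neg, Real.cos_neg, Real.sin_neg, neg_mul_neg, Int.cast_ofNat,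
        Int.cast_neg, Int.cast_one]
      rw [MAIN_B (3*K-1) (K-1) (by omega)]
      have hN0 : ((2*(3*K-1):ℕ):ℝ) ≠ 0 := Nat.cast_ne_zero.2 (by omega)
      have hKge : (1:ℝ) ≤ (K:ℝ) := by exact_mod_cast hK1
      have h6 : (-2 + (K:ℝ)*6) ≠ 0 := by intro h; linarith
      have h2 : (2*(3*(K:ℝ)-1)) ≠ 0 := by intro h; linarith
      field_simp
      norm_num
    · -- k > 0
      have hK : (k.toNat : ℤ) = k := Int.toNat_of_nonneg hpos.le
      set K := k.toNat with hKdef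
      have hm : (6*k+2).natAbs = 2*(3*K+1) := by omega
      have hsign : Int.sign k = 1 := Int.sign_eq_one_iff_pos.2 hpos
      have hKR : ((K:ℕ):ℝ) = (k:ℝ) := by exact_mod_cast hK
      have hp : ((6*k+2 : ℤ):ℝ) = ((2*(3*K+1):ℕ):ℝ) := by
        push_cast
        rw [hKR]
        ring
      unfold sigmaFFU
      rw [hm, hsign, hp]
      simp only [Int.cast_ofNat, Int.cast_neg, Int.cast_one]
      rw [MAIN_A (3*K+1) K rfl]
      have hN0 : ((2*(3*K+1):ℕ):ℝ) ≠ 0 := Nat.cast_ne_zero.2 (by omega)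
      field_simp
      norm_num
end

section
/- For every nonzero integer k, the negative continued fraction identity (8k+1)/4 = [[2k, −4]] holds, and consequently σ(4, 8k+1, −1) = 1 − sgn(k). -/
section AuxFFU

open Finset Complex

/-- closed form of piece sums -/
lemma sum_piece (C : ℤ) (u : ℕ) (v : ℕ) (hv : u ≤ v) :
    6 * ∑ b ∈ Finset.Ico u v, (b:ℤ)*(C - 4*b) =
      3*C*((v:ℤ)*(v-1) - (u:ℤ)*(u-1)) - 4*((v:ℤ)*(v-1)*(2*v-1) - (u:ℤ)*(u-1)*(2*u-1)) := by

  induction v, hv using Nat.le_induction with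
  | base => simp
  | succ v hv ih =>
      rw [Finset.sum_Ico_succ_top hv, mul_add, ih]
      push_cast
      ring

/-- emod value on a piece -/
lemma emod_piece (n : ℤ) (c : ℤ) (x : ℤ) (h1 : (c-1)*n < x) (h2 : x ≤ c*n) (hn : 0 < n) :
    (-x) % n = c*n - x := by
  have h : -x = (c*n - x) + n * (-c) := by ring
  rw [h, Int.add_mul_emod_self_left]
  exact Int.emod_eq_of_lt (by nlinarith) (by nlinarith)

def NZ (n : ℕ) (e : ℤ) : ℤ := ∑ b ∈ Finset.range n, (b:ℤ) * ((-(4*(b:ℤ) + e)) % (n:ℤ))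

lemma piece_val (n : ℕ) (e c : ℤ) (u v : ℕ) (huv : u ≤ v) (hn : 0 < (n:ℤ))
    (hb : ∀ b : ℕ, u ≤ b → b < v → (c-1)*(n:ℤ) < 4*(b:ℤ)+e ∧ 4*(b:ℤ)+e ≤ c*(n:ℤ)) :
    6 * ∑ b ∈ Finset.Ico u v, (b:ℤ) * ((-(4*(b:ℤ) + e)) % (n:ℤ)) =
      3*(c*n-e)*((v:ℤ)*(v-1) - (u:ℤ)*(u-1))
        - 4*((v:ℤ)*(v-1)*(2*v-1) - (u:ℤ)*(u-1)*(2*u-1)) := by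
  rw [show ∑ b ∈ Finset.Ico u v, (b:ℤ) * ((-(4*(b:ℤ) + e)) % (n:ℤ))
      = ∑ b ∈ Finset.Ico u v, (b:ℤ) * ((c*n-e) - 4*b) from
    Finset.sum_congr rfl (fun b hb' => by
      rw [Finset.mem_Ico] at hb'
      obtain ⟨h1, h2⟩ := hb b hb'.1 hb'.2
      rw [emod_piece n c (4*(b:ℤ)+e) h1 h2 hn]
      ring)]
  exact sum_piece _ u v huv

lemma NZ_split (n : ℕ) (e : ℤ) (a₁ a₂ a₃ a₄ : ℕ)
    (h1 : a₁ ≤ a₂) (h2 : a₂ ≤ a₃) (h3 : a₃ ≤ a₄) (h4 : a₄ ≤ n) :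
    NZ n e = (∑ b ∈ Finset.Ico 0 a₁, (b:ℤ) * ((-(4*(b:ℤ) + e)) % (n:ℤ)))
      + (∑ b ∈ Finset.Ico a₁ a₂, (b:ℤ) * ((-(4*(b:ℤ) + e)) % (n:ℤ)))
      + (∑ b ∈ Finset.Ico a₂ a₃, (b:ℤ) * ((-(4*(b:ℤ) + e)) % (n:ℤ)))
      + (∑ b ∈ Finset.Ico a₃ a₄, (b:ℤ) * ((-(4*(b:ℤ) + e)) % (n:ℤ)))
      + (∑ b ∈ Finset.Ico a₄ n, (b:ℤ) * ((-(4*(b:ℤ) + e)) % (n:ℤ))) := by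
  rw [NZ, Finset.range_eq_Ico,
    ← Finset.sum_Ico_consecutive _ (Nat.zero_le a₁) (le_trans h1 (le_trans h2 (le_trans h3 h4))),
    ← Finset.sum_Ico_consecutive _ h1 (le_trans h2 (le_trans h3 h4)),
    ← Finset.sum_Ico_consecutive _ h2 (le_trans h3 h4),
    ← Finset.sum_Ico_consecutive _ h3 h4]
  ring


lemma NZ1_0 (K : ℕ) (hK : 1 ≤ K) : 6 * NZ (8*K+1) (0) = 704*(K:ℤ)^3+312*K^2+28*K := by
  have hn : (0:ℤ) < ((8*K+1 : ℕ):ℤ) := by push_cast; omega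
  rw [NZ_split (8*K+1) (0) (1) (2*K+1) (4*K+1) (6*K+1) (by omega) (by omega) (by omega) (by omega)]
  have p0 : (∑ b ∈ Finset.Ico (0:ℕ) (1:ℕ), ((b:ℤ) * ((-(4*(b:ℤ) + (0))) % ((8*K+1:ℕ):ℤ)))) = 0 := by
    refine Finset.sum_eq_zero fun b hb => ?_
    rw [Finset.mem_Ico] at hb
    have hb0 : b = 0 := by omega
    subst hb0; simp
  have p1 := piece_val (8*K+1) (0) (1) (1) (2*K+1) (by omega) hn (fun b hb1 hb2 => by constructor <;> push_cast <;> omega)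
  have p2 := piece_val (8*K+1) (0) (2) (2*K+1) (4*K+1) (by omega) hn (fun b hb1 hb2 => by constructor <;> push_cast <;> omega)
  have p3 := piece_val (8*K+1) (0) (3) (4*K+1) (6*K+1) (by omega) hn (fun b hb1 hb2 => by constructor <;> push_cast <;> omega)
  have p4 := piece_val (8*K+1) (0) (4) (6*K+1) (8*K+1) (by omega) hn (fun b hb1 hb2 => by constructor <;> push_cast <;> omega)
  push_cast at p0 p1 p2 p3 p4 ⊢
  linear_combination 6*p0 + p1 + p2 + p3 + p4

lemma NZ1_1 (K : ℕ) (hK : 1 ≤ K) : 6 * NZ (8*K+1) (1) = 704*(K:ℤ)^3+120*K^2+4*K := by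
  have hn : (0:ℤ) < ((8*K+1 : ℕ):ℤ) := by push_cast; omega
  rw [NZ_split (8*K+1) (1) (0) (2*K+1) (4*K+1) (6*K+1) (by omega) (by omega) (by omega) (by omega)]
  have p0 : (∑ b ∈ Finset.Ico (0:ℕ) (0:ℕ), ((b:ℤ) * ((-(4*(b:ℤ) + (1))) % ((8*K+1:ℕ):ℤ)))) = 0 := by
    refine Finset.sum_eq_zero fun b hb => ?_
    rw [Finset.mem_Ico] at hb
    have hb0 : b = 0 := by omega
    subst hb0; simp
  have p1 := piece_val (8*K+1) (1) (1) (0) (2*K+1) (by omega) hn (fun b hb1 hb2 => by constructor <;> push_cast <;> omega)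
  have p2 := piece_val (8*K+1) (1) (2) (2*K+1) (4*K+1) (by omega) hn (fun b hb1 hb2 => by constructor <;> push_cast <;> omega)
  have p3 := piece_val (8*K+1) (1) (3) (4*K+1) (6*K+1) (by omega) hn (fun b hb1 hb2 => by constructor <;> push_cast <;> omega)
  have p4 := piece_val (8*K+1) (1) (4) (6*K+1) (8*K+1) (by omega) hn (fun b hb1 hb2 => by constructor <;> push_cast <;> omega)
  push_cast at p0 p1 p2 p3 p4 ⊢
  linear_combination 6*p0 + p1 + p2 + p3 + p4

lemma NZ1_4 (K : ℕ) (hK : 1 ≤ K) : 6 * NZ (8*K+1) (4) = 704*(K:ℤ)^3+120*K^2+4*K := by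
  have hn : (0:ℤ) < ((8*K+1 : ℕ):ℤ) := by push_cast; omega
  rw [NZ_split (8*K+1) (4) (2*K) (4*K) (6*K) (8*K+1) (by omega) (by omega) (by omega) (by omega)]
  have p0 := piece_val (8*K+1) (4) (1) (0) (2*K) (by omega) hn (fun b hb1 hb2 => by constructor <;> push_cast <;> omega)
  have p1 := piece_val (8*K+1) (4) (2) (2*K) (4*K) (by omega) hn (fun b hb1 hb2 => by constructor <;> push_cast <;> omega)
  have p2 := piece_val (8*K+1) (4) (3) (4*K) (6*K) (by omega) hn (fun b hb1 hb2 => by constructor <;> push_cast <;> omega)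
  have p3 := piece_val (8*K+1) (4) (4) (6*K) (8*K+1) (by omega) hn (fun b hb1 hb2 => by constructor <;> push_cast <;> omega)
  have p4 : (∑ b ∈ Finset.Ico (8*K+1:ℕ) (8*K+1:ℕ), ((b:ℤ) * ((-(4*(b:ℤ) + (4))) % ((8*K+1:ℕ):ℤ)))) = 0 := by
    refine Finset.sum_eq_zero fun b hb => ?_
    rw [Finset.mem_Ico] at hb
    have hb0 : b = 0 := by omega
    subst hb0; simp
  push_cast at p0 p1 p2 p3 p4 ⊢
  linear_combination p0 + p1 + p2 + p3 + 6*p4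

lemma NZ1_5 (K : ℕ) (hK : 1 ≤ K) : 6 * NZ (8*K+1) (5) = 704*(K:ℤ)^3+312*K^2+28*K := by
  have hn : (0:ℤ) < ((8*K+1 : ℕ):ℤ) := by push_cast; omega
  rw [NZ_split (8*K+1) (5) (2*K) (4*K) (6*K) (8*K) (by omega) (by omega) (by omega) (by omega)]
  have p0 := piece_val (8*K+1) (5) (1) (0) (2*K) (by omega) hn (fun b hb1 hb2 => by constructor <;> push_cast <;> omega)
  have p1 := piece_val (8*K+1) (5) (2) (2*K) (4*K) (by omega) hn (fun b hb1 hb2 => by constructor <;> push_cast <;> omega)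
  have p2 := piece_val (8*K+1) (5) (3) (4*K) (6*K) (by omega) hn (fun b hb1 hb2 => by constructor <;> push_cast <;> omega)
  have p3 := piece_val (8*K+1) (5) (4) (6*K) (8*K) (by omega) hn (fun b hb1 hb2 => by constructor <;> push_cast <;> omega)
  have p4 := piece_val (8*K+1) (5) (5) (8*K) (8*K+1) (by omega) hn (fun b hb1 hb2 => by constructor <;> push_cast <;> omega)
  push_cast at p0 p1 p2 p3 p4 ⊢
  linear_combination p0 + p1 + p2 + p3 + p4

lemma NZ1_m (K : ℕ) (hK : 1 ≤ K) : 6 * NZ (8*K+1) (4*(K:ℤ)+3) = 800*(K:ℤ)^3+36*K^2-8*K := by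
  have hn : (0:ℤ) < ((8*K+1 : ℕ):ℤ) := by push_cast; omega
  rw [NZ_split (8*K+1) (4*(K:ℤ)+3) (K) (3*K) (5*K+1) (7*K+1) (by omega) (by omega) (by omega) (by omega)]
  have p0 := piece_val (8*K+1) (4*(K:ℤ)+3) (1) (0) (K) (by omega) hn (fun b hb1 hb2 => by constructor <;> push_cast <;> omega)
  have p1 := piece_val (8*K+1) (4*(K:ℤ)+3) (2) (K) (3*K) (by omega) hn (fun b hb1 hb2 => by constructor <;> push_cast <;> omega)
  have p2 := piece_val (8*K+1) (4*(K:ℤ)+3) (3) (3*K) (5*K+1) (by omega) hn (fun b hb1 hb2 => by constructor <;> push_cast <;> omega)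
  have p3 := piece_val (8*K+1) (4*(K:ℤ)+3) (4) (5*K+1) (7*K+1) (by omega) hn (fun b hb1 hb2 => by constructor <;> push_cast <;> omega)
  have p4 := piece_val (8*K+1) (4*(K:ℤ)+3) (5) (7*K+1) (8*K+1) (by omega) hn (fun b hb1 hb2 => by constructor <;> push_cast <;> omega)
  push_cast at p0 p1 p2 p3 p4 ⊢
  linear_combination p0 + p1 + p2 + p3 + p4

lemma NZ7_0 (K : ℕ) : 6 * NZ (8*K+7) (0) = 704*(K:ℤ)^3+1800*K^2+1516*K+420 := by
  have hn : (0:ℤ) < ((8*K+7 : ℕ):ℤ) := by push_cast; omega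
  rw [NZ_split (8*K+7) (0) (1) (2*K+2) (4*K+4) (6*K+6) (by omega) (by omega) (by omega) (by omega)]
  have p0 : (∑ b ∈ Finset.Ico (0:ℕ) (1:ℕ), ((b:ℤ) * ((-(4*(b:ℤ) + (0))) % ((8*K+7:ℕ):ℤ)))) = 0 := by
    refine Finset.sum_eq_zero fun b hb => ?_
    rw [Finset.mem_Ico] at hb
    have hb0 : b = 0 := by omega
    subst hb0; simp
  have p1 := piece_val (8*K+7) (0) (1) (1) (2*K+2) (by omega) hn (fun b hb1 hb2 => by constructor <;> push_cast <;> omega)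
  have p2 := piece_val (8*K+7) (0) (2) (2*K+2) (4*K+4) (by omega) hn (fun b hb1 hb2 => by constructor <;> push_cast <;> omega)
  have p3 := piece_val (8*K+7) (0) (3) (4*K+4) (6*K+6) (by omega) hn (fun b hb1 hb2 => by constructor <;> push_cast <;> omega)
  have p4 := piece_val (8*K+7) (0) (4) (6*K+6) (8*K+7) (by omega) hn (fun b hb1 hb2 => by constructor <;> push_cast <;> omega)
  push_cast at p0 p1 p2 p3 p4 ⊢
  linear_combination 6*p0 + p1 + p2 + p3 + p4

lemma NZ7_1 (K : ℕ) : 6 * NZ (8*K+7) (1) = 704*(K:ℤ)^3+1608*K^2+1204*K+294 := by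
  have hn : (0:ℤ) < ((8*K+7 : ℕ):ℤ) := by push_cast; omega
  rw [NZ_split (8*K+7) (1) (0) (2*K+2) (4*K+4) (6*K+6) (by omega) (by omega) (by omega) (by omega)]
  have p0 : (∑ b ∈ Finset.Ico (0:ℕ) (0:ℕ), ((b:ℤ) * ((-(4*(b:ℤ) + (1))) % ((8*K+7:ℕ):ℤ)))) = 0 := by
    refine Finset.sum_eq_zero fun b hb => ?_
    rw [Finset.mem_Ico] at hb
    have hb0 : b = 0 := by omega
    subst hb0; simp
  have p1 := piece_val (8*K+7) (1) (1) (0) (2*K+2) (by omega) hn (fun b hb1 hb2 => by constructor <;> push_cast <;> omega)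
  have p2 := piece_val (8*K+7) (1) (2) (2*K+2) (4*K+4) (by omega) hn (fun b hb1 hb2 => by constructor <;> push_cast <;> omega)
  have p3 := piece_val (8*K+7) (1) (3) (4*K+4) (6*K+6) (by omega) hn (fun b hb1 hb2 => by constructor <;> push_cast <;> omega)
  have p4 := piece_val (8*K+7) (1) (4) (6*K+6) (8*K+7) (by omega) hn (fun b hb1 hb2 => by constructor <;> push_cast <;> omega)
  push_cast at p0 p1 p2 p3 p4 ⊢
  linear_combination 6*p0 + p1 + p2 + p3 + p4

lemma NZ7_4 (K : ℕ) : 6 * NZ (8*K+7) (4) = 704*(K:ℤ)^3+1608*K^2+1204*K+294 := by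
  have hn : (0:ℤ) < ((8*K+7 : ℕ):ℤ) := by push_cast; omega
  rw [NZ_split (8*K+7) (4) (0) (2*K+1) (4*K+3) (6*K+5) (by omega) (by omega) (by omega) (by omega)]
  have p0 : (∑ b ∈ Finset.Ico (0:ℕ) (0:ℕ), ((b:ℤ) * ((-(4*(b:ℤ) + (4))) % ((8*K+7:ℕ):ℤ)))) = 0 := by
    refine Finset.sum_eq_zero fun b hb => ?_
    rw [Finset.mem_Ico] at hb
    have hb0 : b = 0 := by omega
    subst hb0; simp
  have p1 := piece_val (8*K+7) (4) (1) (0) (2*K+1) (by omega) hn (fun b hb1 hb2 => by constructor <;> push_cast <;> omega)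
  have p2 := piece_val (8*K+7) (4) (2) (2*K+1) (4*K+3) (by omega) hn (fun b hb1 hb2 => by constructor <;> push_cast <;> omega)
  have p3 := piece_val (8*K+7) (4) (3) (4*K+3) (6*K+5) (by omega) hn (fun b hb1 hb2 => by constructor <;> push_cast <;> omega)
  have p4 := piece_val (8*K+7) (4) (4) (6*K+5) (8*K+7) (by omega) hn (fun b hb1 hb2 => by constructor <;> push_cast <;> omega)
  push_cast at p0 p1 p2 p3 p4 ⊢
  linear_combination 6*p0 + p1 + p2 + p3 + p4

lemma NZ7_5 (K : ℕ) : 6 * NZ (8*K+7) (5) = 704*(K:ℤ)^3+1800*K^2+1516*K+420 := by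
  have hn : (0:ℤ) < ((8*K+7 : ℕ):ℤ) := by push_cast; omega
  rw [NZ_split (8*K+7) (5) (2*K+1) (4*K+3) (6*K+5) (8*K+6) (by omega) (by omega) (by omega) (by omega)]
  have p0 := piece_val (8*K+7) (5) (1) (0) (2*K+1) (by omega) hn (fun b hb1 hb2 => by constructor <;> push_cast <;> omega)
  have p1 := piece_val (8*K+7) (5) (2) (2*K+1) (4*K+3) (by omega) hn (fun b hb1 hb2 => by constructor <;> push_cast <;> omega)
  have p2 := piece_val (8*K+7) (5) (3) (4*K+3) (6*K+5) (by omega) hn (fun b hb1 hb2 => by constructor <;> push_cast <;> omega)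
  have p3 := piece_val (8*K+7) (5) (4) (6*K+5) (8*K+6) (by omega) hn (fun b hb1 hb2 => by constructor <;> push_cast <;> omega)
  have p4 := piece_val (8*K+7) (5) (5) (8*K+6) (8*K+7) (by omega) hn (fun b hb1 hb2 => by constructor <;> push_cast <;> omega)
  push_cast at p0 p1 p2 p3 p4 ⊢
  linear_combination p0 + p1 + p2 + p3 + p4

lemma NZ7_m (K : ℕ) : 6 * NZ (8*K+7) (4*(K:ℤ)+6) = 800*(K:ℤ)^3+1980*K^2+1648*K+462 := by
  have hn : (0:ℤ) < ((8*K+7 : ℕ):ℤ) := by push_cast; omega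
  rw [NZ_split (8*K+7) (4*(K:ℤ)+6) (K+1) (3*K+3) (5*K+4) (7*K+6) (by omega) (by omega) (by omega) (by omega)]
  have p0 := piece_val (8*K+7) (4*(K:ℤ)+6) (1) (0) (K+1) (by omega) hn (fun b hb1 hb2 => by constructor <;> push_cast <;> omega)
  have p1 := piece_val (8*K+7) (4*(K:ℤ)+6) (2) (K+1) (3*K+3) (by omega) hn (fun b hb1 hb2 => by constructor <;> push_cast <;> omega)
  have p2 := piece_val (8*K+7) (4*(K:ℤ)+6) (3) (3*K+3) (5*K+4) (by omega) hn (fun b hb1 hb2 => by constructor <;> push_cast <;> omega)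
  have p3 := piece_val (8*K+7) (4*(K:ℤ)+6) (4) (5*K+4) (7*K+6) (by omega) hn (fun b hb1 hb2 => by constructor <;> push_cast <;> omega)
  have p4 := piece_val (8*K+7) (4*(K:ℤ)+6) (5) (7*K+6) (8*K+7) (by omega) hn (fun b hb1 hb2 => by constructor <;> push_cast <;> omega)
  push_cast at p0 p1 p2 p3 p4 ⊢
  linear_combination p0 + p1 + p2 + p3 + p4

lemma Nsum_case1 (K : ℕ) (hK : 1 ≤ K) :
    NZ (8*K+1) 0 + NZ (8*K+1) 1 + NZ (8*K+1) 4 + NZ (8*K+1) 5 + 8 * NZ (8*K+1) (4*(K:ℤ)+3)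
      = 3*((8*K+1:ℕ):ℤ)*(((8*K+1:ℕ):ℤ)-1)^2 := by
  have h0 := NZ1_0 K hK
  have h1 := NZ1_1 K hK
  have h4 := NZ1_4 K hK
  have h5 := NZ1_5 K hK
  have hm := NZ1_m K hK
  push_cast
  linarith

lemma Nsum_case7 (K : ℕ) :
    NZ (8*K+7) 0 + NZ (8*K+7) 1 + NZ (8*K+7) 4 + NZ (8*K+7) 5 + 8 * NZ (8*K+7) (4*(K:ℤ)+6)
      = 3*((8*K+7:ℕ):ℤ)*(((8*K+7:ℕ):ℤ)-1)^2 + 2*((8*K+7:ℕ):ℤ)^2 := by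
  have h0 := NZ7_0 K
  have h1 := NZ7_1 K
  have h4 := NZ7_4 K
  have h5 := NZ7_5 K
  have hm := NZ7_m K
  push_cast
  linarith

/-- unique-representative indicator sum -/
lemma inner_ind (n : ℕ) (hn : 0 < n) (x : ℤ) :
    ∑ a ∈ Finset.range n, (a:ℤ) * (if (n:ℤ) ∣ ((a:ℤ) + x) then 1 else 0) = (-x) % (n:ℤ) := by
  have hnz : (0:ℤ) < (n:ℤ) := by exact_mod_cast hn
  set r : ℤ := (-x) % (n:ℤ) with hr
  have hr0 : 0 ≤ r := Int.emod_nonneg _ (by omega)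
  have hrn : r < n := Int.emod_lt_of_pos _ hnz
  have hdvd : (n:ℤ) ∣ (r + x) := by
    have : (r + x) % (n:ℤ) = ((-x) + x) % (n:ℤ) := by
      rw [hr, Int.add_emod, Int.emod_emod_of_dvd _ dvd_rfl, ← Int.add_emod]
    rw [Int.dvd_iff_emod_eq_zero, this]
    simp
  have key : ∀ a ∈ Finset.range n, ((n:ℤ) ∣ ((a:ℤ) + x)) ↔ (a:ℤ) = r := by
    intro a ha
    rw [Finset.mem_range] at ha
    constructor
    · intro hd
      have hsub : (n:ℤ) ∣ ((a:ℤ) - r) := by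
        have := dvd_sub hd hdvd
        simpa using this
      obtain ⟨d, hd2⟩ := hsub
      have han : (a:ℤ) < n := by exact_mod_cast ha
      have ha0 : (0:ℤ) ≤ a := Int.ofNat_nonneg a
      rcases lt_trichotomy d 0 with h | h | h
      · nlinarith [hd2]
      · rw [h, mul_zero] at hd2; omega
      · nlinarith [hd2]
    · intro h
      have : (a:ℤ) + x = (r + x) := by omega
      rw [this]; exact hdvd
  rw [Finset.sum_congr rfl (fun a ha => by rw [if_congr (key a ha) rfl rfl])]
  have : ∑ a ∈ Finset.range n, (a:ℤ) * (if (a:ℤ) = r then 1 else 0)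
      = ∑ a ∈ Finset.range n, (if a = r.toNat then ((a:ℤ)) else 0) := by
    refine Finset.sum_congr rfl fun a _ => ?_
    by_cases h : (a:ℤ) = r
    · rw [if_pos h, if_pos (by omega), mul_one]
    · rw [if_neg h, if_neg (by omega), mul_zero]
  rw [this, Finset.sum_ite_eq' (Finset.range n) r.toNat (fun a => (a:ℤ)),
    if_pos (Finset.mem_range.mpr (by omega))]
  omega

/-- sawtooth identity -/
lemma sawtooth (n : ℕ) (z : ℂ) (hz : z ^ n = 1) (h1 : z ≠ 1) :
    (∑ a ∈ Finset.range n, (a:ℂ) * z ^ a) * (z - 1) = n := by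
  have hgeom : ∑ a ∈ Finset.range n, z ^ a = 0 := by
    rw [geom_sum_eq h1, hz]
    simp
  have key : ∀ N : ℕ, (∑ a ∈ Finset.range N, (a:ℂ) * z ^ a) * (z - 1)
      = N * z ^ N - (∑ a ∈ Finset.range N, z ^ a) - z ^ N + 1 := by
    intro N
    induction N with
    | zero => simp
    | succ N ih =>
        rw [Finset.sum_range_succ, Finset.sum_range_succ, add_mul, ih]
        push_cast
        ring
  rw [key n, hz, hgeom]
  ring


lemma geom_Icc (n : ℕ) (hn : 2 ≤ n) (ζ : ℂ) (hζ : IsPrimitiveRoot ζ n) (E : ℕ) :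
    ∑ j ∈ Finset.Icc 1 (n-1), (ζ^E)^j = (if n ∣ E then (n:ℂ) else 0) - 1 := by
  have hIcc : Finset.Icc 1 (n-1) = Finset.Ico 1 n := by
    rw [← Finset.Ico_add_one_right_eq_Icc]
    congr 1
    omega
  have hsplit : ∑ j ∈ Finset.range n, (ζ^E)^j
      = (ζ^E)^0 + ∑ j ∈ Finset.Ico 1 n, (ζ^E)^j := by
    rw [Finset.range_eq_Ico, Finset.sum_eq_sum_Ico_succ_bot (by omega : 0 < n)]
  by_cases hd : n ∣ E
  · have h1 : ζ^E = 1 := by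
      obtain ⟨c, rfl⟩ := hd
      rw [pow_mul, hζ.pow_eq_one, one_pow]
    rw [hIcc, if_pos hd]
    simp only [h1, one_pow, Finset.sum_const, Nat.card_Ico, nsmul_eq_mul, mul_one]
    push_cast [Nat.cast_sub (by omega : 1 ≤ n)]
    ring
  · have h1 : ζ^E ≠ 1 := fun h => hd ((hζ.pow_eq_one_iff_dvd E).mp h)
    have hzn : (ζ^E)^n = 1 := by
      rw [← pow_mul, mul_comm, pow_mul, hζ.pow_eq_one, one_pow]
    have hg : ∑ j ∈ Finset.range n, (ζ^E)^j = 0 := by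
      rw [geom_sum_eq h1, hzn]; simp
    rw [hIcc, if_neg hd]
    rw [hg, pow_zero] at hsplit
    linear_combination -hsplit

lemma coprime_four (n : ℕ) (hodd : n % 2 = 1) : Nat.Coprime n 4 := by
  have h2 : Nat.Coprime n 2 := by
    exact Nat.coprime_two_right.mpr (Nat.odd_iff.mpr hodd)
  have : (4:ℕ) = 2^2 := by norm_num
  rw [this]
  exact Nat.Coprime.pow_right 2 h2

lemma not_dvd_four (n j : ℕ) (hodd : n % 2 = 1) (hj1 : 1 ≤ j) (hj2 : j ≤ n - 1) :
    ¬ (n ∣ 4 * j) := by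
  intro h
  have hn2 : 2 ≤ n := by omega
  have hdj : n ∣ j := (Nat.Coprime.dvd_of_dvd_mul_left (coprime_four n hodd) h)
  have := Nat.le_of_dvd (by omega) hdj
  omega

lemma sin_ne_zero_1 (n j : ℕ) (hj1 : 1 ≤ j) (hj2 : j ≤ n - 1) (hn : 2 ≤ n) :
    Real.sin (Real.pi * j / n) ≠ 0 := by
  have h1 : (0:ℝ) < Real.pi * j / n := by
    have : (0:ℝ) < j := by exact_mod_cast hj1
    have : (0:ℝ) < n := by positivity
    positivity
  have h2 : Real.pi * j / n < Real.pi := by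
    rw [div_lt_iff₀ (by positivity)]
    have hjn : (j:ℝ) < n := by exact_mod_cast (by omega : j < n)
    nlinarith [Real.pi_pos]
  exact ne_of_gt (Real.sin_pos_of_pos_of_lt_pi h1 h2)

lemma sin_ne_zero_4 (n j : ℕ) (hodd : n % 2 = 1) (hj1 : 1 ≤ j) (hj2 : j ≤ n - 1) :
    Real.sin (Real.pi * j * 4 / n) ≠ 0 := by
  have hn2 : 2 ≤ n := by omega
  intro h
  rw [Real.sin_eq_zero_iff] at h
  obtain ⟨m, hm⟩ := h
  have hnR : (n:ℝ) ≠ 0 := by positivity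
  rw [eq_div_iff hnR] at hm
  have hmul : Real.pi * ((m:ℝ) * n) = Real.pi * (4*j) := by linear_combination hm
  have hre : (m:ℝ) * n = 4 * j := mul_left_cancel₀ Real.pi_ne_zero hmul
  have hmn : m * (n:ℤ) = 4 * j := by exact_mod_cast hre
  have hm0 : 0 < m := by nlinarith [hmn, (by exact_mod_cast hn2 : (2:ℤ) ≤ n), (by exact_mod_cast hj1 : (1:ℤ) ≤ (j:ℤ))]
  have hdvd : n ∣ 4 * j := by
    refine (Int.natCast_dvd_natCast).mp ?_
    exact ⟨m, by push_cast; linarith [hmn]⟩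
  exact not_dvd_four n j hodd hj1 hj2 hdvd

noncomputable def gterm (n j : ℕ) : ℝ :=
  Real.cos (Real.pi * j / n) / Real.sin (Real.pi * j / n) *
    (Real.cos (Real.pi * j * 4 / n) / Real.sin (Real.pi * j * 4 / n)) +
  2 * (-1:ℝ) ^ j * (1 / Real.sin (Real.pi * j / n) * (1 / Real.sin (Real.pi * j * 4 / n)))

lemma term_eq (n j : ℕ) (hn : 7 ≤ n) (hodd : n % 2 = 1) (hj1 : 1 ≤ j) (hj2 : j ≤ n - 1) :
    (gterm n j : ℂ) =
      -(((Complex.exp (2*Real.pi*I/n))^j + 1) * ((Complex.exp (2*Real.pi*I/n))^(4*j) + 1)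
          + 8 * (Complex.exp (2*Real.pi*I/n))^(((n+5)/2)*j))
        / (((Complex.exp (2*Real.pi*I/n))^j - 1) * ((Complex.exp (2*Real.pi*I/n))^(4*j) - 1)) := by
  have hnne : ((n:ℂ)) ≠ 0 := by exact_mod_cast (by omega : (n:ℕ) ≠ 0)
  set u : ℂ := Complex.exp ((Real.pi * j / n : ℝ) * I) with hu
  have hu0 : u ≠ 0 := Complex.exp_ne_zero _
  -- powers of ζ in terms of u
  have hz : (Complex.exp (2*Real.pi*I/n))^j = u^2 := by
    rw [hu, ← Complex.exp_nat_mul, ← Complex.exp_nat_mul]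
    congr 1
    push_cast
    field_simp
  have hz4 : (Complex.exp (2*Real.pi*I/n))^(4*j) = u^8 := by
    rw [hu, ← Complex.exp_nat_mul, ← Complex.exp_nat_mul]
    congr 1
    push_cast
    field_simp
    ring
  have hzm : (Complex.exp (2*Real.pi*I/n))^(((n+5)/2)*j) = (-1:ℂ)^j * u^5 := by
    have h2m : ((((n+5)/2) : ℕ) : ℂ) * 2 = (n:ℂ) + 5 := by
      have hnat : ((n+5)/2)*2 = n+5 := by omega
      exact_mod_cast congrArg (Nat.cast : ℕ → ℂ) hnat
    rw [hu, ← Complex.exp_nat_mul, ← Complex.exp_nat_mul]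
    rw [show (-1:ℂ) = Complex.exp (Real.pi * I) by rw [Complex.exp_pi_mul_I],
      ← Complex.exp_nat_mul, ← Complex.exp_add]
    congr 1
    have h2 : (2:ℂ) ≠ 0 := two_ne_zero
    push_cast
    field_simp
    linear_combination (j:ℂ) * h2m
  -- real sin/cos nonvanishing
  have hs1 := sin_ne_zero_1 n j hj1 hj2 (by omega)
  have hs4 := sin_ne_zero_4 n j hodd hj1 hj2
  -- u-relations for cos and sin
  have harg4 : ((Real.pi * j * 4 / n : ℝ) : ℂ) * I = (4:ℕ) * ((Real.pi * j / n : ℝ) * I) := by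
    push_cast; ring
  have hexp4 : Complex.exp ((Real.pi * j * 4 / n : ℝ) * I) = u^4 := by
    rw [harg4, Complex.exp_nat_mul]
  have hexpneg : ∀ x : ℝ, Complex.exp (-(x:ℂ) * I) = (Complex.exp ((x:ℂ) * I))⁻¹ := by
    intro x
    rw [show (-(x:ℂ) * I) = -((x:ℂ)*I) by ring, Complex.exp_neg]
  have hcos1 : ((Real.cos (Real.pi * j / n) : ℝ) : ℂ) * (2*u) = u^2 + 1 := by
    rw [Complex.ofReal_cos, Complex.cos, hexpneg, ← hu]
    field_simp
  have hsin1 : ((Real.sin (Real.pi * j / n) : ℝ) : ℂ) * (2*I*u) = u^2 - 1 := by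
    rw [Complex.ofReal_sin, Complex.sin, hexpneg, ← hu]
    field_simp [Complex.I_ne_zero]
    linear_combination (1 - u^2) * Complex.I_sq
  have hcos4 : ((Real.cos (Real.pi * j * 4 / n) : ℝ) : ℂ) * (2*u^4) = u^8 + 1 := by
    rw [Complex.ofReal_cos, Complex.cos, hexpneg, hexp4]
    field_simp
  have hsin4 : ((Real.sin (Real.pi * j * 4 / n) : ℝ) : ℂ) * (2*I*u^4) = u^8 - 1 := by
    rw [Complex.ofReal_sin, Complex.sin, hexpneg, hexp4]
    field_simp [Complex.I_ne_zero]
    linear_combination (1 - u^8) * Complex.I_sq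
  have hs1C : ((Real.sin (Real.pi * j / n) : ℝ) : ℂ) ≠ 0 := by exact_mod_cast hs1
  have hs4C : ((Real.sin (Real.pi * j * 4 / n) : ℝ) : ℂ) ≠ 0 := by exact_mod_cast hs4
  have hd1 : u^2 - 1 ≠ 0 := by
    rw [← hsin1]
    exact mul_ne_zero hs1C (by simp [Complex.I_ne_zero, hu0])
  have hd4 : u^8 - 1 ≠ 0 := by
    rw [← hsin4]
    exact mul_ne_zero hs4C (by simp [Complex.I_ne_zero, hu0])
  have hcot1 : ((Real.cos (Real.pi * j / n) : ℝ) : ℂ) / ((Real.sin (Real.pi * j / n) : ℝ) : ℂ)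
      = I * (u^2+1) / (u^2-1) := by
    rw [div_eq_div_iff hs1C hd1]
    linear_combination (-1:ℂ) * ((Real.cos (Real.pi * j / n) : ℝ) : ℂ) * hsin1
      + I * ((Real.sin (Real.pi * j / n) : ℝ) : ℂ) * hcos1
  have hcot4 : ((Real.cos (Real.pi * j * 4 / n) : ℝ) : ℂ) / ((Real.sin (Real.pi * j * 4 / n) : ℝ) : ℂ)
      = I * (u^8+1) / (u^8-1) := by
    rw [div_eq_div_iff hs4C hd4]
    linear_combination (-1:ℂ) * ((Real.cos (Real.pi * j * 4 / n) : ℝ) : ℂ) * hsin4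
      + I * ((Real.sin (Real.pi * j * 4 / n) : ℝ) : ℂ) * hcos4
  have hcsc1 : 1 / ((Real.sin (Real.pi * j / n) : ℝ) : ℂ) = 2*I*u / (u^2-1) := by
    rw [div_eq_div_iff hs1C hd1]
    linear_combination -hsin1
  have hcsc4 : 1 / ((Real.sin (Real.pi * j * 4 / n) : ℝ) : ℂ) = 2*I*u^4 / (u^8-1) := by
    rw [div_eq_div_iff hs4C hd4]
    linear_combination -hsin4
  rw [hz, hz4, hzm]
  rw [gterm]
  simp only [Complex.ofReal_add, Complex.ofReal_mul, Complex.ofReal_div, Complex.ofReal_pow,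
    Complex.ofReal_neg, Complex.ofReal_one, Complex.ofReal_ofNat]
  rw [hcot1, hcot4, hcsc1, hcsc4]
  field_simp [hd1, hd4]
  linear_combination ((1:ℂ) + u^2 + 8*u^5*(-1:ℂ)^j + u^8 + u^10) * Complex.I_sq

noncomputable def chiN (n E : ℕ) : ℂ := (if n ∣ E then (n:ℂ) else 0) - 1

lemma fam (n : ℕ) (hn : 7 ≤ n) (e : ℕ) :
    ∑ a ∈ Finset.range n, ∑ b ∈ Finset.range n, ((a:ℂ)*(b:ℂ)) * chiN n (a+4*b+e)
      = (n:ℂ) * ((NZ n (e:ℤ) : ℤ):ℂ) - (∑ a ∈ Finset.range n, (a:ℂ))^2 := by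
  have hsplit : ∀ a b : ℕ, ((a:ℂ)*(b:ℂ)) * chiN n (a+4*b+e)
      = ((a:ℂ)*(b:ℂ)) * (if n ∣ (a+4*b+e) then (n:ℂ) else 0) - (a:ℂ)*(b:ℂ) := by
    intro a b; rw [chiN]; ring
  simp only [hsplit, Finset.sum_sub_distrib]
  have h2 : ∑ a ∈ Finset.range n, ∑ b ∈ Finset.range n, (a:ℂ)*(b:ℂ)
      = (∑ a ∈ Finset.range n, (a:ℂ))^2 := by
    rw [sq, Finset.sum_mul_sum]
  rw [h2]
  congr 1
  rw [Finset.sum_comm]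
  have hb : ∀ b ∈ Finset.range n, ∑ a ∈ Finset.range n, ((a:ℂ)*(b:ℂ)) * (if n ∣ (a+4*b+e) then (n:ℂ) else 0)
      = (n:ℂ) * ((b:ℂ) * ((((-(4*(b:ℤ)+(e:ℤ))) % (n:ℤ)) : ℤ) : ℂ)) := by
    intro b _
    have h := inner_ind n (by omega) (4*(b:ℤ)+(e:ℤ))
    have h2' := congrArg (fun z : ℤ => (z:ℂ)) h
    simp only [Int.cast_sum, Int.cast_mul, Int.cast_natCast, Int.cast_ite, Int.cast_one,
      Int.cast_zero] at h2'
    have hcond : ∀ a : ℕ, ((n:ℤ) ∣ ((a:ℤ) + (4*(b:ℤ)+(e:ℤ)))) ↔ (n ∣ (a+4*b+e)) := by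
      intro a
      rw [← Int.natCast_dvd_natCast]
      constructor <;> intro hd <;> [skip; skip] <;>
        · convert hd using 1
          push_cast
          ring
    rw [show ∑ a ∈ Finset.range n, ((a:ℂ)*(b:ℂ)) * (if n ∣ (a+4*b+e) then (n:ℂ) else 0)
        = ((b:ℂ) * (n:ℂ)) * ∑ a ∈ Finset.range n, (a:ℂ) * (if (n:ℤ) ∣ ((a:ℤ) + (4*(b:ℤ)+(e:ℤ))) then (1:ℂ) else 0) from by
      rw [Finset.mul_sum]
      refine Finset.sum_congr rfl fun a _ => ?_
      rw [if_congr (hcond a) rfl rfl]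
      split_ifs <;> ring]
    rw [h2']
    ring
  rw [Finset.sum_congr rfl hb, NZ]
  push_cast
  rw [Finset.mul_sum]

lemma core (n : ℕ) (hn : 7 ≤ n) (hodd : n % 2 = 1) :
    ((n:ℝ)) * ∑ j ∈ Finset.Icc 1 (n-1), gterm n j
      = 3*(n:ℝ)*((n:ℝ)-1)^2
        - (((NZ n 0 + NZ n 1 + NZ n 4 + NZ n 5 + 8 * NZ n ((((n+5)/2 : ℕ)):ℤ)) : ℤ) : ℝ) := by
  set m : ℕ := (n+5)/2 with hm
  set ζ : ℂ := Complex.exp (2*(Real.pi:ℂ)*I/n) with hζdef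
  have hζ : IsPrimitiveRoot ζ n := Complex.isPrimitiveRoot_exp n (by omega : n ≠ 0)
  have hnC : (n:ℂ) ≠ 0 := by
    simp only [ne_eq, Nat.cast_eq_zero]
    omega
  have key : ∀ j ∈ Finset.Icc 1 (n-1), (n:ℂ)^2 * (gterm n j : ℂ)
      = -(∑ a ∈ Finset.range n, ∑ b ∈ Finset.range n, ((a:ℂ)*(b:ℂ)) *
          ((ζ^(a+4*b))^j + (ζ^(a+4*b+1))^j + (ζ^(a+4*b+4))^j + (ζ^(a+4*b+5))^j
            + 8*(ζ^(a+4*b+m))^j)) := by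
    intro j hj
    rw [Finset.mem_Icc] at hj
    have hndj : ¬ (n ∣ j) := by
      intro hd
      have := Nat.le_of_dvd (by omega) hd
      omega
    have hw1 : ζ^j ≠ 1 := fun h => hndj ((hζ.pow_eq_one_iff_dvd j).mp h)
    have hwn : (ζ^j)^n = 1 := by rw [← pow_mul, mul_comm, pow_mul, hζ.pow_eq_one, one_pow]
    have hnd4j : ¬ (n ∣ 4*j) := not_dvd_four n j hodd hj.1 hj.2
    have hw41 : ζ^(4*j) ≠ 1 := fun h => hnd4j ((hζ.pow_eq_one_iff_dvd (4*j)).mp h)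
    have hw4n : (ζ^(4*j))^n = 1 := by rw [← pow_mul, mul_comm, pow_mul, hζ.pow_eq_one, one_pow]
    have hA := sawtooth n (ζ^j) hwn hw1
    have hB := sawtooth n (ζ^(4*j)) hw4n hw41
    have hDA : ζ^j - 1 ≠ 0 := by
      intro h0
      rw [h0, mul_zero] at hA
      exact hnC hA.symm
    have hDB : ζ^(4*j) - 1 ≠ 0 := by
      intro h0
      rw [h0, mul_zero] at hB
      exact hnC hB.symm
    have hterm := term_eq n j hn hodd hj.1 hj.2
    have hterm' : (gterm n j : ℂ) = -((ζ^j + 1) * (ζ^(4*j) + 1) + 8 * ζ^(m*j))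
        / ((ζ^j - 1) * (ζ^(4*j) - 1)) := by
      rw [hterm, hζdef]
    have hPAB : (n:ℂ)^2 * (gterm n j : ℂ)
        = -((ζ^j + 1) * (ζ^(4*j) + 1) + 8 * ζ^(m*j))
          * (∑ a ∈ Finset.range n, (a:ℂ) * (ζ^j)^a)
          * (∑ b ∈ Finset.range n, (b:ℂ) * (ζ^(4*j))^b) := by
      have hc : ((ζ^j - 1) * (ζ^(4*j) - 1))
          * (-((ζ^j + 1) * (ζ^(4*j) + 1) + 8 * ζ^(m*j)) / ((ζ^j - 1) * (ζ^(4*j) - 1)))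
          = -((ζ^j + 1) * (ζ^(4*j) + 1) + 8 * ζ^(m*j)) := by
        field_simp
      calc (n:ℂ)^2 * (gterm n j : ℂ)
          = ((∑ a ∈ Finset.range n, (a:ℂ) * (ζ^j)^a) * (ζ^j - 1))
            * ((∑ b ∈ Finset.range n, (b:ℂ) * (ζ^(4*j))^b) * (ζ^(4*j) - 1))
            * (gterm n j : ℂ) := by rw [hA, hB]; ring
        _ = (∑ a ∈ Finset.range n, (a:ℂ) * (ζ^j)^a)
            * (∑ b ∈ Finset.range n, (b:ℂ) * (ζ^(4*j))^b)
            * (((ζ^j - 1) * (ζ^(4*j) - 1))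
              * (-((ζ^j + 1) * (ζ^(4*j) + 1) + 8 * ζ^(m*j)) / ((ζ^j - 1) * (ζ^(4*j) - 1)))) := by
              rw [hterm']; ring
        _ = _ := by rw [hc]; ring
    have expand : ((ζ^j + 1) * (ζ^(4*j) + 1) + 8 * ζ^(m*j)) *
        ((∑ a ∈ Finset.range n, (a:ℂ) * (ζ^j)^a) * (∑ b ∈ Finset.range n, (b:ℂ) * (ζ^(4*j))^b))
        = ∑ a ∈ Finset.range n, ∑ b ∈ Finset.range n, ((a:ℂ)*(b:ℂ)) *
            ((ζ^(a+4*b))^j + (ζ^(a+4*b+1))^j + (ζ^(a+4*b+4))^j + (ζ^(a+4*b+5))^j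
              + 8*(ζ^(a+4*b+m))^j) := by
      rw [Finset.sum_mul_sum]
      rw [Finset.mul_sum]
      refine Finset.sum_congr rfl fun a _ => ?_
      rw [Finset.mul_sum]
      refine Finset.sum_congr rfl fun b _ => ?_
      ring
    rw [hPAB, ← expand]
    ring
  have hsum : ∑ j ∈ Finset.Icc 1 (n-1), (n:ℂ)^2 * (gterm n j : ℂ)
      = -(∑ a ∈ Finset.range n, ∑ b ∈ Finset.range n, ((a:ℂ)*(b:ℂ)) *
          (chiN n (a+4*b) + chiN n (a+4*b+1) + chiN n (a+4*b+4) + chiN n (a+4*b+5)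
            + 8 * chiN n (a+4*b+m))) := by
    rw [Finset.sum_congr rfl key, Finset.sum_neg_distrib]
    refine congrArg Neg.neg ?_
    rw [Finset.sum_comm]
    refine Finset.sum_congr rfl fun a _ => ?_
    rw [Finset.sum_comm]
    refine Finset.sum_congr rfl fun b _ => ?_
    rw [← Finset.mul_sum]
    have hdist : ∑ j ∈ Finset.Icc 1 (n-1),
        ((ζ^(a+4*b))^j + (ζ^(a+4*b+1))^j + (ζ^(a+4*b+4))^j + (ζ^(a+4*b+5))^j
          + 8*(ζ^(a+4*b+m))^j)
        = (∑ j ∈ Finset.Icc 1 (n-1), (ζ^(a+4*b))^j)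
          + (∑ j ∈ Finset.Icc 1 (n-1), (ζ^(a+4*b+1))^j)
          + (∑ j ∈ Finset.Icc 1 (n-1), (ζ^(a+4*b+4))^j)
          + (∑ j ∈ Finset.Icc 1 (n-1), (ζ^(a+4*b+5))^j)
          + 8 * (∑ j ∈ Finset.Icc 1 (n-1), (ζ^(a+4*b+m))^j) := by
      rw [Finset.mul_sum]
      rw [← Finset.sum_add_distrib, ← Finset.sum_add_distrib, ← Finset.sum_add_distrib,
        ← Finset.sum_add_distrib]
    rw [hdist, geom_Icc n (by omega) ζ hζ, geom_Icc n (by omega) ζ hζ,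
      geom_Icc n (by omega) ζ hζ, geom_Icc n (by omega) ζ hζ, geom_Icc n (by omega) ζ hζ]
    rw [chiN, chiN, chiN, chiN, chiN]
  -- apply fam
  have hfam0 := fam n hn 0
  have hfam1 := fam n hn 1
  have hfam4 := fam n hn 4
  have hfam5 := fam n hn 5
  have hfamm := fam n hn m
  simp only [Nat.add_zero] at hfam0
  have hdistrib : ∑ a ∈ Finset.range n, ∑ b ∈ Finset.range n, ((a:ℂ)*(b:ℂ)) *
          (chiN n (a+4*b) + chiN n (a+4*b+1) + chiN n (a+4*b+4) + chiN n (a+4*b+5)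
            + 8 * chiN n (a+4*b+m))
      = (∑ a ∈ Finset.range n, ∑ b ∈ Finset.range n, ((a:ℂ)*(b:ℂ)) * chiN n (a+4*b))
        + (∑ a ∈ Finset.range n, ∑ b ∈ Finset.range n, ((a:ℂ)*(b:ℂ)) * chiN n (a+4*b+1))
        + (∑ a ∈ Finset.range n, ∑ b ∈ Finset.range n, ((a:ℂ)*(b:ℂ)) * chiN n (a+4*b+4))
        + (∑ a ∈ Finset.range n, ∑ b ∈ Finset.range n, ((a:ℂ)*(b:ℂ)) * chiN n (a+4*b+5))
        + 8 * (∑ a ∈ Finset.range n, ∑ b ∈ Finset.range n, ((a:ℂ)*(b:ℂ)) * chiN n (a+4*b+m)) := by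
    rw [Finset.mul_sum]
    rw [← Finset.sum_add_distrib, ← Finset.sum_add_distrib, ← Finset.sum_add_distrib,
      ← Finset.sum_add_distrib]
    refine Finset.sum_congr rfl fun a _ => ?_
    rw [Finset.mul_sum]
    rw [← Finset.sum_add_distrib, ← Finset.sum_add_distrib, ← Finset.sum_add_distrib,
      ← Finset.sum_add_distrib]
    refine Finset.sum_congr rfl fun b _ => ?_
    ring
  -- Gauss sum
  have hG : (∑ a ∈ Finset.range n, (a:ℂ)) * 2 = (n:ℂ) * ((n:ℂ) - 1) := by
    have h := Finset.sum_range_id_mul_two n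
    have h2 := congrArg (fun z : ℕ => (z:ℂ)) h
    push_cast [Nat.cast_sub (by omega : 1 ≤ n)] at h2
    exact h2
  -- final complex identity
  have hfinal : (n:ℂ)^2 * ((∑ j ∈ Finset.Icc 1 (n-1), gterm n j : ℝ) : ℂ)
      = (n:ℂ) * (3*(n:ℂ)*((n:ℂ)-1)^2
        - (((NZ n 0 + NZ n 1 + NZ n 4 + NZ n 5 + 8 * NZ n ((m:ℕ):ℤ)) : ℤ) : ℂ)) := by
    rw [Complex.ofReal_sum, Finset.mul_sum]
    rw [hsum, hdistrib, hfam0, hfam1, hfam4, hfam5, hfamm]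
    push_cast
    linear_combination (3*(n:ℂ)*((n:ℂ)-1) + 6*(∑ a ∈ Finset.range n, (a:ℂ))) * hG
  have := mul_left_cancel₀ hnC (by linear_combination hfinal :
    (n:ℂ) * ((n:ℂ) * ((∑ j ∈ Finset.Icc 1 (n-1), gterm n j : ℝ) : ℂ))
      = (n:ℂ) * (3*(n:ℂ)*((n:ℂ)-1)^2
        - (((NZ n 0 + NZ n 1 + NZ n 4 + NZ n 5 + 8 * NZ n ((m:ℕ):ℤ)) : ℤ) : ℂ)))
  have hreal := this
  apply Complex.ofReal_injective
  push_cast at hreal ⊢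
  convert hreal using 2 <;> norm_cast

lemma sigma_eq_sum_pos (p : ℤ) (n : ℕ) (hp : (p:ℝ) = (n:ℝ)) (hnat : p.natAbs = n) :
    sigmaFFU 4 p (-1) = (1/(n:ℝ)) * ∑ j ∈ Finset.Icc 1 (n-1), gterm n j := by
  rw [sigmaFFU, hnat]
  congr 1
  · rw [hp]
  · refine Finset.sum_congr rfl fun j hj => ?_
    rw [gterm, hp]
    push_cast
    ring

lemma sigma_eq_sum_neg (p : ℤ) (n : ℕ) (hp : (p:ℝ) = -(n:ℝ)) (hnat : p.natAbs = n)
    (hn : 7 ≤ n) (hodd : n % 2 = 1) :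
    sigmaFFU 4 p (-1) = (1/(-(n:ℝ))) * ∑ j ∈ Finset.Icc 1 (n-1), gterm n j := by
  rw [sigmaFFU, hnat]
  congr 1
  · rw [hp]
  · refine Finset.sum_congr rfl fun j hj => ?_
    rw [Finset.mem_Icc] at hj
    have hs1 := sin_ne_zero_1 n j hj.1 hj.2 (by omega)
    have hs4 := sin_ne_zero_4 n j hodd hj.1 hj.2
    have ha1 : Real.pi * (j:ℝ) / (p:ℝ) = -(Real.pi * j / n) := by rw [hp]; ring
    have ha4 : Real.pi * (j:ℝ) * ((4:ℤ):ℝ) / (p:ℝ) = -(Real.pi * j * 4 / n) := by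
      rw [hp]; push_cast; ring
    rw [gterm, ha1, ha4, Real.cos_neg, Real.sin_neg, Real.cos_neg, Real.sin_neg]
    push_cast
    field_simp

end AuxFFU

/-- For `k ≠ 0`, `(8k+1)/4 = [[2k, -4]]` and `σ(4, 8k+1, -1) = 1 - sgn k`. -/
theorem ncf_sigma_eight_k_one (k : ℤ) (hk : k ≠ 0) :
    ncf [2 * k, -4] = ((8 * k + 1 : ℤ) : ℚ) / 4 ∧
      sigmaFFU 4 (8 * k + 1) (-1) = 1 - ((Int.sign k : ℤ) : ℝ) := by
  constructor
  · show ((2*k : ℤ) : ℚ) - 1 / ncf [-4] = _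
    show ((2*k : ℤ) : ℚ) - 1 / ((-4 : ℤ) : ℚ) = _
    push_cast
    norm_num
    ring
  · rcases lt_or_gt_of_ne hk with hneg | hpos
    · -- k < 0
      set L : ℕ := (-k-1).toNat with hL
      have hLk : (L:ℤ) = -k-1 := by omega
      set n : ℕ := 8*L+7 with hn
      have hnat : (8*k+1 : ℤ).natAbs = n := by omega
      have hpZ : (8*k+1 : ℤ) = -((n:ℕ):ℤ) := by omega
      have hp : ((8*k+1 : ℤ):ℝ) = -((n:ℕ):ℝ) := by
        rw [hpZ]; push_cast; ring
      have hodd : n % 2 = 1 := by omega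
      have h7 : 7 ≤ n := by omega
      have hcore := core n h7 hodd
      have hm : (((n+5)/2 : ℕ) : ℤ) = 4*(L:ℤ)+6 := by
        have : ((n+5)/2 : ℕ) = 4*L+6 := by omega
        rw [this]; push_cast; ring
      rw [hm] at hcore
      have hNZ := Nsum_case7 L
      have hNZ' : NZ n 0 + NZ n 1 + NZ n 4 + NZ n 5 + 8 * NZ n (4*(L:ℤ)+6)
          = 3*((n:ℕ):ℤ)*(((n:ℕ):ℤ)-1)^2 + 2*((n:ℕ):ℤ)^2 := by
        rw [hn]; exact_mod_cast hNZ
      rw [hNZ'] at hcore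
      have hnR : ((n:ℕ):ℝ) ≠ 0 := by positivity
      have hS : ∑ j ∈ Finset.Icc 1 (n-1), gterm n j = -2*(n:ℝ) := by
        have h2 : ((n:ℕ):ℝ) * (∑ j ∈ Finset.Icc 1 (n-1), gterm n j) = (n:ℝ) * (-2*(n:ℝ)) := by
          rw [hcore]; push_cast; ring
        exact mul_left_cancel₀ hnR h2
      rw [sigma_eq_sum_neg (8*k+1) n hp hnat h7 hodd, hS]
      rw [Int.sign_eq_neg_one_of_neg hneg]
      have hval : (1/(-(n:ℝ))) * (-2*(n:ℝ)) = 2 := by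
        field_simp
      rw [hval]
      push_cast
      norm_num
    · -- k > 0
      set K : ℕ := k.toNat with hK
      have hKk : (K:ℤ) = k := by omega
      have hK1 : 1 ≤ K := by omega
      set n : ℕ := 8*K+1 with hn
      have hnat : (8*k+1 : ℤ).natAbs = n := by omega
      have hp : ((8*k+1 : ℤ):ℝ) = ((n:ℕ):ℝ) := by
        have : (8*k+1 : ℤ) = ((n:ℕ):ℤ) := by omega
        rw [this]
        push_cast
        ring
      have hodd : n % 2 = 1 := by omega
      have h7 : 7 ≤ n := by omega
      have hcore := core n h7 hodd
      have hm : (((n+5)/2 : ℕ) : ℤ) = 4*(K:ℤ)+3 := by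
        have : ((n+5)/2 : ℕ) = 4*K+3 := by omega
        rw [this]; push_cast; ring
      rw [hm] at hcore
      have hNZ := Nsum_case1 K hK1
      have hNZ' : NZ n 0 + NZ n 1 + NZ n 4 + NZ n 5 + 8 * NZ n (4*(K:ℤ)+3)
          = 3*((n:ℕ):ℤ)*(((n:ℕ):ℤ)-1)^2 := by
        rw [hn]; exact_mod_cast hNZ
      rw [hNZ'] at hcore
      have hnR : ((n:ℕ):ℝ) ≠ 0 := by positivity
      have hS : ∑ j ∈ Finset.Icc 1 (n-1), gterm n j = 0 := by
        have h2 : ((n:ℕ):ℝ) * (∑ j ∈ Finset.Icc 1 (n-1), gterm n j) = (n:ℝ) * 0 := by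
          rw [hcore]; push_cast; ring
        exact mul_left_cancel₀ hnR h2
      rw [sigma_eq_sum_pos (8*k+1) n hp hnat, hS]
      rw [Int.sign_eq_one_of_pos hpos]
      norm_num
end
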